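/- If R is a terminating left head variable free ATRS, then dh(→_R, t) ≤ dh(→_{U↓(R)}, t) for every term t over the signature of R, and consequently dc_R(n) ≤ dc_{U↓(R)}(n) for all n; in particular dc_R(n) ∈ O(dc_{U↓(R)}(n)). -/

import Mathlib

/-- First-order terms over a signature `F` with arity function `ar` and variables `V`. -/
inductive Term (F : Type) (ar : F → ℕ) (V : Type) : Type where
  | var : V → Term F ar V
  | app : (f : F) → (Fin (ar f) → Term F ar V) → Term F ar V

namespace Term

variable {F V : Type} {ar : F → ℕ}

/-- Application of a substitution. -/
def subst (σ : V → Term F ar V) : Term F ar V → Term F ar V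
  | .var x => σ x
  | .app f ts => .app f (fun i => (ts i).subst σ)

/-- Size of a term. -/
def size : Term F ar V → ℕ
  | .var _ => 1
  | .app _ ts => 1 + ∑ i, (ts i).size

end Term

section Rewriting

variable {F V : Type} {ar : F → ℕ}

/-- The (reflexive) subterm relation: `Subterm u t` means `u` occurs in `t`. -/
inductive Subterm : Term F ar V → Term F ar V → Prop where
  | refl (t) : Subterm t t
  | app (f) (ts : Fin (ar f) → Term F ar V) (i) (u) :
      Subterm u (ts i) → Subterm u (.app f ts)

/-- Proper subterm: `PSub u t` means `u` is a proper subterm of `t`. -/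
def PSub (u t : Term F ar V) : Prop :=
  ∃ (f : F) (ts : Fin (ar f) → Term F ar V) (i : Fin (ar f)),
    t = Term.app f ts ∧ Subterm u (ts i)

/-- One-step rewrite relation of a TRS `R`: closure of the rules under
contexts and substitutions. -/
inductive Rew (R : Set (Term F ar V × Term F ar V)) : Term F ar V → Term F ar V → Prop where
  | rule (l r : Term F ar V) (σ : V → Term F ar V) :
      (l, r) ∈ R → Rew R (l.subst σ) (r.subst σ)
  | congr (f : F) (ts : Fin (ar f) → Term F ar V) (i : Fin (ar f)) (u : Term F ar V) :
      Rew R (ts i) u → Rew R (.app f ts) (.app f (Function.update ts i u))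

/-- Many-step rewriting. -/
def RStar (R : Set (Term F ar V × Term F ar V)) : Term F ar V → Term F ar V → Prop :=
  Relation.ReflTransGen (Rew R)

/-- Normal forms. -/
def NF (R : Set (Term F ar V × Term F ar V)) (t : Term F ar V) : Prop := ∀ u, ¬ Rew R t u

/-- `t` rewrites to the normal form `u` (w.r.t. `R`). -/
def NormTo (R : Set (Term F ar V × Term F ar V)) (t u : Term F ar V) : Prop :=
  RStar R t u ∧ NF R u

/-- Termination: the rewrite relation is well-founded. -/
def Terminating (R : Set (Term F ar V × Term F ar V)) : Prop :=
  WellFounded (fun t s => Rew R s t)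

/-- Confluence. -/
def Confluent (R : Set (Term F ar V × Term F ar V)) : Prop :=
  ∀ s t u, RStar R s t → RStar R s u → ∃ v, RStar R t v ∧ RStar R u v

/-- Innermost one-step rewriting: the contracted redex has only normal
proper subterms. -/
inductive IRew (R : Set (Term F ar V × Term F ar V)) : Term F ar V → Term F ar V → Prop where
  | rule (l r : Term F ar V) (σ : V → Term F ar V) :
      (l, r) ∈ R → (∀ u, PSub u (l.subst σ) → NF R u) →
      IRew R (l.subst σ) (r.subst σ)
  | congr (f : F) (ts : Fin (ar f) → Term F ar V) (i : Fin (ar f)) (u : Term F ar V) :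
      IRew R (ts i) u → IRew R (.app f ts) (.app f (Function.update ts i u))

/-- Innermost termination. -/
def ITerminating (R : Set (Term F ar V × Term F ar V)) : Prop :=
  WellFounded (fun t s => IRew R s t)

/-- `m`-fold composition of a relation. -/
def RelPow (r : α → α → Prop) : ℕ → α → α → Prop
  | 0 => Eq
  | n + 1 => fun a c => ∃ b, r a b ∧ RelPow r n b c

/-- Derivation height of `t` w.r.t. a relation. -/
noncomputable def dh (r : α → α → Prop) (t : α) : ℕ :=
  sSup { m | ∃ u, RelPow r m t u }

/-- Derivational complexity w.r.t. a relation, restricted to starting terms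
satisfying `P`. -/
noncomputable def dcOn {F V : Type} {ar : F → ℕ}
    (r : Term F ar V → Term F ar V → Prop) (P : Term F ar V → Prop) (n : ℕ) : ℕ :=
  sSup { m | ∃ t, P t ∧ t.size ≤ n ∧ m = dh r t }

/-- `f ∈ O(g)`. -/
def BigO (f g : ℕ → ℕ) : Prop := ∃ M N : ℕ, ∀ n, f n ≤ M * g n + N

end Rewriting
section ATRS

/-- Signature for (un)curried applicative systems: `none` is the binary
application symbol `∘`, and `some (c, i)` is the symbol `c_i` of arity `i`
(with `c_0 = c` an applicative constant). -/
abbrev USig (C : Type) := Option (C × ℕ)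

/-- Arity function for `USig`. -/
def uar {C : Type} : USig C → ℕ
  | none => 2
  | some (_, i) => i

/-- Terms over the signature `USig C` (variables are natural numbers). -/
abbrev ATerm (C : Type) := Term (USig C) uar ℕ

variable {C : Type}

/-- Binary application `s ∘ t`. -/
def appT (s t : ATerm C) : ATerm C :=
  .app none (fun i => if i.1 = 0 then s else t)

/-- The applicative constant `c` (i.e. `c_0`). -/
def constT (c : C) : ATerm C :=
  .app (some (c, 0)) (fun i => (Nat.not_lt_zero _ i.isLt).elim)

/-- Symbols of a purely applicative term: only `∘` and constants `c_0`. -/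
def ApplicativeSym : USig C → Prop
  | none => True
  | some (_, i) => i = 0

/-- A term over the applicative signature (constants plus `∘`). -/
def ApplicativeT (t : ATerm C) : Prop :=
  ∀ (u : ATerm C) (f : USig C) (ts : Fin (uar f) → ATerm C),
    Subterm u t → u = Term.app f ts → ApplicativeSym f

/-- `headCount t = some (c, n)` iff `t = c ∘ t₁ ∘ ⋯ ∘ tₙ` for some terms `tᵢ`. -/
def headCount : ATerm C → Option (C × ℕ)
  | .var _ => none
  | .app none ts => (headCount (ts ⟨0, by simp [uar]⟩)).map (fun p => (p.1, p.2 + 1))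
  | .app (some (_, _ + 1)) _ => none
  | .app (some (c, 0)) _ => some (c, 0)

/-- The spine `c ∘ t₁ ∘ ⋯ ∘ tₙ` occurs as a subterm of a left- or
right-hand side of `R`. -/
def SpineIn (R : Set (ATerm C × ATerm C)) (c : C) (n : ℕ) : Prop :=
  ∃ p ∈ R, ∃ t : ATerm C, (Subterm t p.1 ∨ Subterm t p.2) ∧ headCount t = some (c, n)

/-- `aa` is the applicative-arity function of `R`: `aa c` is the maximal `n`
such that `c ∘ t₁ ∘ ⋯ ∘ tₙ` occurs in a rule of `R` (and `0` if `c` does not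
occur applied). -/
def AASpec (R : Set (ATerm C × ATerm C)) (aa : C → ℕ) : Prop :=
  ∀ c : C, (∀ n, SpineIn R c n → n ≤ aa c) ∧ (aa c = 0 ∨ SpineIn R c (aa c))

/-- A term is head variable free if no subterm is of the form `x ∘ v` with
`x` a variable. -/
def HeadVarFree (t : ATerm C) : Prop :=
  ∀ u : ATerm C, Subterm u t → ∀ (x : ℕ) (v : ATerm C), u ≠ appT (.var x) v

/-- Basic well-formedness of an applicative TRS: left-hand sides are not
variables, right-hand side variables occur on the left, and both sides are
applicative terms. -/
def IsATRS (R : Set (ATerm C × ATerm C)) : Prop :=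
  ∀ p ∈ R, (∀ x : ℕ, p.1 ≠ Term.var x) ∧
    (∀ x : ℕ, Subterm (.var x) p.2 → Subterm (.var x) p.1) ∧
    ApplicativeT p.1 ∧ ApplicativeT p.2

/-- `R` is left head variable free. -/
def LHVF (R : Set (ATerm C × ATerm C)) : Prop := ∀ p ∈ R, HeadVarFree p.1

/-- The variables `x_0, …, x_{i-1}`. -/
def uvars (i : ℕ) : Fin i → ATerm C := fun j => .var j.1

/-- The term `f_i(x_0,…,x_{i-1})`. -/
def fiT (c : C) (i : ℕ) : ATerm C := .app (some (c, i)) (fun j => .var j.1)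

/-- The uncurrying system `U`, with rules
`c_i(x_1,…,x_i) ∘ y → c_{i+1}(x_1,…,x_i,y)` for all `0 ≤ i < aa c`. -/
def USys (aa : C → ℕ) : Set (ATerm C × ATerm C) :=
  { p | ∃ (c : C) (i : ℕ), i < aa c ∧
      p = (appT (fiT c i) (.var i), fiT c (i + 1)) }

/-- The currying system `C(F)` (for a signature with arities `arF`), with
rules `f_{i+1}(x_1,…,x_i,y) → f_i(x_1,…,x_i) ∘ y` for all `0 ≤ i < arF f`
(where `f_{arF f}` plays the role of `f`). -/
def CurrySys {F : Type} (arF : F → ℕ) : Set (ATerm F × ATerm F) :=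
  { p | ∃ (f : F) (i : ℕ), i < arF f ∧
      p = (fiT f (i + 1), appT (fiT f i) (.var i)) }

/-- The η-saturation `R_η` of `R` (w.r.t. applicative arities `aa`). -/
inductive Eta (aa : C → ℕ) (R : Set (ATerm C × ATerm C)) : ATerm C × ATerm C → Prop where
  | base (p) : p ∈ R → Eta aa R p
  | eta (l r : ATerm C) (c : C) (n x : ℕ) :
      Eta aa R (l, r) → headCount l = some (c, n) → n < aa c →
      ¬ Subterm (.var x) l → ¬ Subterm (.var x) r →
      Eta aa R (appT l (.var x), appT r (.var x))

/-- The uncurried system `R_η↓`: the rules of `R_η` with both sides in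
`U`-normal form. -/
def EtaDown (aa : C → ℕ) (R : Set (ATerm C × ATerm C)) : Set (ATerm C × ATerm C) :=
  { p | ∃ l r : ATerm C, Eta aa R (l, r) ∧
      NormTo (USys aa) l p.1 ∧ NormTo (USys aa) r p.2 }

/-- The transformed system `U↓(R) = R_η↓ ∪ U(R)`. -/
def UD (aa : C → ℕ) (R : Set (ATerm C × ATerm C)) : Set (ATerm C × ATerm C) :=
  EtaDown aa R ∪ USys aa

/-- Symbols of the signature of `U↓(R)`: `∘` and `c_i` with `i ≤ aa c`. -/
def GoodSym (aa : C → ℕ) : USig C → Prop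
  | none => True
  | some (c, i) => i ≤ aa c

/-- A term over the signature of `U↓(R)`. -/
def GoodTerm (aa : C → ℕ) (t : ATerm C) : Prop :=
  ∀ (u : ATerm C) (f : USig C) (ts : Fin (uar f) → ATerm C),
    Subterm u t → u = Term.app f ts → GoodSym aa f

/-- `C'`: curry a term over the signature of `U↓(R)` and identify all
symbols `c_i` originating from the same constant `c`. -/
def curryId : ATerm C → ATerm C
  | .var x => .var x
  | .app none ts => appT (curryId (ts ⟨0, by simp [uar]⟩)) (curryId (ts ⟨1, by simp [uar]⟩))
  | .app (some (c, i)) ts =>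
      (List.ofFn (fun j : Fin (uar (some (c, i))) => curryId (ts j))).foldl appT (constT c)

end ATRS

section Generic

variable {F V : Type} {ar : F → ℕ}

theorem Subterm.trans {a b c : Term F ar V} (h1 : Subterm a b) (h2 : Subterm b c) :
    Subterm a c := by
  induction h2 with
  | refl => exact h1
  | app f ts i u h ih => exact Subterm.app f ts i a (ih h1)

theorem subterm_app_inv {u : Term F ar V} {f : F} {ts : Fin (ar f) → Term F ar V}
    (h : Subterm u (.app f ts)) : u = Term.app f ts ∨ ∃ i, Subterm u (ts i) := by
  cases h with
  | refl => exact Or.inl rfl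
  | app _ _ i _ h => exact Or.inr ⟨i, h⟩

theorem size_pos (t : Term F ar V) : 1 ≤ t.size := by
  cases t with
  | var x => simp [Term.size]
  | app f ts => simp [Term.size]

theorem subterm_size_le {u t : Term F ar V} (h : Subterm u t) : u.size ≤ t.size := by
  induction h with
  | refl => exact le_refl _
  | app f ts i u h ih =>
      refine le_trans ih ?_
      have : (ts i).size ≤ ∑ j, (ts j).size :=
        Finset.single_le_sum (f := fun j => (ts j).size) (fun _ _ => Nat.zero_le _)
          (Finset.mem_univ i)
      simp only [Term.size]; omega

theorem subst_ext {t : Term F ar V} {σ τ : V → Term F ar V}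
    (h : ∀ x, Subterm (.var x) t → σ x = τ x) : t.subst σ = t.subst τ := by
  induction t with
  | var x => exact h x (Subterm.refl _)
  | app f ts ih =>
      simp only [Term.subst]
      congr 1
      funext i
      exact ih i (fun x hx => h x (Subterm.app f ts i _ hx))

theorem subst_comp (t : Term F ar V) (σ τ : V → Term F ar V) :
    (t.subst σ).subst τ = t.subst (fun x => (σ x).subst τ) := by
  induction t with
  | var x => rfl
  | app f ts ih => simp only [Term.subst]; congr 1; funext i; exact ih i

theorem subterm_var_subst {t : Term F ar V} {x : V} (σ : V → Term F ar V)
    (h : Subterm (.var x) t) : Subterm (σ x) (t.subst σ) := by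
  induction t with
  | var y =>
      cases h with
      | refl => exact Subterm.refl _
  | app f ts ih =>
      rcases subterm_app_inv h with h' | ⟨i, hi⟩
      · exact absurd h' (by intro h''; cases h'')
      · exact Subterm.app f (fun j => (ts j).subst σ) i _ (ih i hi)

/-- Subterms of a substituted term. -/
theorem subterm_subst_inv {u : Term F ar V} {t : Term F ar V} {σ : V → Term F ar V}
    (h : Subterm u (t.subst σ)) :
    (∃ f gs, Subterm (Term.app f gs) t ∧ u = (Term.app f gs).subst σ) ∨
    (∃ x, Subterm (.var x) t ∧ Subterm u (σ x)) := by
  induction t with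
  | var x => exact Or.inr ⟨x, Subterm.refl _, h⟩
  | app f ts ih =>
      rcases subterm_app_inv h with h' | ⟨i, hi⟩
      · exact Or.inl ⟨f, ts, Subterm.refl _, h'⟩
      · rcases ih i hi with ⟨g, gs, hsub, he⟩ | ⟨x, hx, hu⟩
        · exact Or.inl ⟨g, gs, Subterm.trans hsub (Subterm.app f ts i _ (Subterm.refl _)), he⟩
        · exact Or.inr ⟨x, Subterm.app f ts i _ hx, hu⟩

theorem size_subst_le {t : Term F ar V} {σ : V → Term F ar V} {K : ℕ} (hK : 1 ≤ K)
    (h : ∀ x, Subterm (.var x) t → (σ x).size ≤ K) : (t.subst σ).size ≤ t.size * K := by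
  induction t with
  | var x => simpa [Term.size, Term.subst] using h x (Subterm.refl _)
  | app f ts ih =>
      simp only [Term.subst, Term.size]
      have : ∀ i, ((ts i).subst σ).size ≤ (ts i).size * K :=
        fun i => ih i (fun x hx => h x (Subterm.app f ts i _ hx))
      calc 1 + ∑ i, ((ts i).subst σ).size ≤ 1 + ∑ i, (ts i).size * K := by
            gcongr with i; exact this i
        _ ≤ (1 + ∑ i, (ts i).size) * K := by
            rw [add_mul, Finset.sum_mul]
            exact Nat.add_le_add (by omega) (le_refl _)

end Generic

section RelPowLemmas

variable {α : Type*} {r : α → α → Prop}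

theorem relPow_zero (a : α) : RelPow r 0 a a := rfl

theorem relPow_one {a b : α} (h : r a b) : RelPow r 1 a b := ⟨b, h, rfl⟩

theorem relPow_add {m n : ℕ} {a b c : α} (h1 : RelPow r m a b) (h2 : RelPow r n b c) :
    RelPow r (m + n) a c := by
  induction m generalizing a with
  | zero => cases h1; simpa using h2
  | succ m ih =>
      obtain ⟨d, hd, hrest⟩ := h1
      rw [Nat.succ_add]
      exact ⟨d, hd, ih hrest⟩

theorem relPow_succ' {m : ℕ} {a b c : α} (h1 : RelPow r m a b) (h2 : r b c) :
    RelPow r (m + 1) a c := relPow_add h1 ⟨c, h2, rfl⟩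

theorem relPow_prefix {M : ℕ} {a c : α} (h : RelPow r M a c) :
    ∀ m ≤ M, ∃ b, RelPow r m a b := by
  induction M generalizing a with
  | zero => intro m hm; interval_cases m; exact ⟨a, rfl⟩
  | succ M ih =>
      obtain ⟨d, hd, hrest⟩ := h
      intro m hm
      match m with
      | 0 => exact ⟨a, rfl⟩
      | m + 1 =>
          obtain ⟨b, hb⟩ := ih hrest m (by omega)
          exact ⟨b, d, hd, hb⟩

theorem reflTransGen_relPow {a b : α} (h : Relation.ReflTransGen r a b) :
    ∃ n, RelPow r n a b := by
  induction h with
  | refl => exact ⟨0, rfl⟩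
  | tail _ hstep ih => obtain ⟨n, hn⟩ := ih; exact ⟨n + 1, relPow_succ' hn hstep⟩

theorem transGen_relPow {a b : α} (h : Relation.TransGen r a b) :
    ∃ n, 1 ≤ n ∧ RelPow r n a b := by
  induction h with
  | single h => exact ⟨1, le_refl _, relPow_one h⟩
  | tail _ hstep ih =>
      obtain ⟨n, hn1, hn⟩ := ih
      exact ⟨n + 1, by omega, relPow_succ' hn hstep⟩

end RelPowLemmas
section RewLemmas

variable {F V : Type} {ar : F → ℕ}

theorem rew_mono {ρ ρ' : Set (Term F ar V × Term F ar V)} (hsub : ρ ⊆ ρ')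
    {a b : Term F ar V} (h : Rew ρ a b) : Rew ρ' a b := by
  induction h with
  | rule l r σ hmem => exact Rew.rule l r σ (hsub hmem)
  | congr f ts i u _ ih => exact Rew.congr f ts i u ih

theorem rew_union_split {ρ ρ' : Set (Term F ar V × Term F ar V)}
    {a b : Term F ar V} (h : Rew (ρ ∪ ρ') a b) : Rew ρ a b ∨ Rew ρ' a b := by
  induction h with
  | rule l r σ hmem =>
      rcases hmem with hm | hm
      · exact Or.inl (Rew.rule l r σ hm)
      · exact Or.inr (Rew.rule l r σ hm)
  | congr f ts i u _ ih =>
      rcases ih with ih | ih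
      · exact Or.inl (Rew.congr f ts i u ih)
      · exact Or.inr (Rew.congr f ts i u ih)

theorem rew_subst {ρ : Set (Term F ar V × Term F ar V)} {a b : Term F ar V}
    (h : Rew ρ a b) (δ : V → Term F ar V) : Rew ρ (a.subst δ) (b.subst δ) := by
  induction h with
  | rule l r σ hmem =>
      rw [subst_comp, subst_comp]
      exact Rew.rule l r _ hmem
  | congr f ts i u _ ih =>
      have he : (Term.app f (Function.update ts i u)).subst δ
          = Term.app f (Function.update (fun j => (ts j).subst δ) i (u.subst δ)) := by
        simp only [Term.subst]
        congr 1
        funext j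
        by_cases hj : j = i
        · subst hj; simp
        · simp [Function.update_of_ne hj]
      rw [he]
      exact Rew.congr f _ i _ ih

/-- single-step closure at one argument position -/
theorem rew_arg {ρ : Set (Term F ar V × Term F ar V)} (f : F)
    (ts : Fin (ar f) → Term F ar V) (i : Fin (ar f)) {x y : Term F ar V}
    (hx : ts i = x) (h : Rew ρ x y) :
    Rew ρ (.app f ts) (.app f (Function.update ts i y)) := by
  subst hx; exact Rew.congr f ts i y h

theorem rstar_arg {ρ : Set (Term F ar V × Term F ar V)} (f : F)
    (ts : Fin (ar f) → Term F ar V) (i : Fin (ar f)) {y : Term F ar V}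
    (h : RStar ρ (ts i) y) :
    RStar ρ (.app f ts) (.app f (Function.update ts i y)) := by
  induction h with
  | refl => rw [Function.update_eq_self]; exact Relation.ReflTransGen.refl
  | tail hab hbc ih =>
      refine Relation.ReflTransGen.tail ih ?_
      have : Rew ρ (.app f (Function.update ts i _)) (.app f (Function.update (Function.update ts i _) i _)) :=
        Rew.congr f _ i _ (by simpa using hbc)
      simpa using this

theorem tg_arg {ρ : Set (Term F ar V × Term F ar V)} (f : F)
    (ts : Fin (ar f) → Term F ar V) (i : Fin (ar f)) {x y : Term F ar V}
    (hx : ts i = x) (h : Relation.TransGen (Rew ρ) x y) :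
    Relation.TransGen (Rew ρ) (.app f ts) (.app f (Function.update ts i y)) := by
  subst hx
  induction h with
  | single h => exact Relation.TransGen.single (Rew.congr f ts i _ h)
  | tail hab hbc ih =>
      refine Relation.TransGen.tail ih ?_
      have : Rew ρ (.app f (Function.update ts i _)) (.app f (Function.update (Function.update ts i _) i _)) :=
        Rew.congr f _ i _ (by simpa using hbc)
      simpa using this

open Classical in
theorem rstar_args {ρ : Set (Term F ar V × Term F ar V)} (f : F)
    {ts us : Fin (ar f) → Term F ar V} (h : ∀ i, RStar ρ (ts i) (us i)) :
    RStar ρ (.app f ts) (.app f us) := by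
  classical
  suffices H : ∀ (S : Finset (Fin (ar f))) (ts : Fin (ar f) → Term F ar V),
      (∀ i, RStar ρ (ts i) (us i)) → (∀ i ∉ S, ts i = us i) →
      RStar ρ (.app f ts) (.app f us) by
    exact H Finset.univ ts h (fun i hi => absurd (Finset.mem_univ i) hi)
  intro S
  induction S using Finset.induction_on with
  | empty =>
      intro ts h h0
      have : ts = us := funext fun i => h0 i (by simp)
      rw [this]; exact Relation.ReflTransGen.refl
  | @insert a S ha ih =>
      intro ts h h0
      have step1 : RStar ρ (.app f ts) (.app f (Function.update ts a (us a))) :=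
        rstar_arg f ts a (h a)
      refine Relation.ReflTransGen.trans step1 (ih _ ?_ ?_)
      · intro i
        by_cases hi : i = a
        · subst hi; simp; exact Relation.ReflTransGen.refl
        · simpa [Function.update_of_ne hi] using h i
      · intro i hi
        by_cases hia : i = a
        · subst hia; simp
        · rw [Function.update_of_ne hia]
          exact h0 i (by simp [hia, hi])

theorem rew_size_le {ρ : Set (Term F ar V × Term F ar V)} {K : ℕ} (hK : 1 ≤ K)
    (hrule : ∀ p ∈ ρ, ∀ σ : V → Term F ar V,
      (p.2.subst σ).size ≤ (p.1.subst σ).size * K)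
    {a b : Term F ar V} (h : Rew ρ a b) : b.size ≤ a.size * K := by
  induction h with
  | rule l r σ hmem => exact hrule _ hmem σ
  | congr f ts i u hr ih =>
      simp only [Term.size]
      have hsum : ∑ j, (Function.update ts i u j).size
          = (∑ j, (ts j).size) - (ts i).size + u.size := by
        classical
        simp only [Function.apply_update (fun _ t => Term.size t) ts i u]
        rw [Finset.sum_update_of_mem (Finset.mem_univ i)]
        have : (ts i).size ≤ ∑ j, (ts j).size :=
          Finset.single_le_sum (f := fun j => (ts j).size) (fun _ _ => Nat.zero_le _)
            (Finset.mem_univ i)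
        rw [Finset.sdiff_singleton_eq_erase]
        have h6 : (ts i).size + ∑ x ∈ Finset.univ.erase i, (ts x).size
            = ∑ k, (ts k).size := by
          simpa using Finset.add_sum_erase Finset.univ (fun k => (ts k).size) (Finset.mem_univ i)
        omega
      rw [hsum]
      have h1 : (ts i).size ≤ ∑ j, (ts j).size :=
        Finset.single_le_sum (f := fun j => (ts j).size) (fun _ _ => Nat.zero_le _)
          (Finset.mem_univ i)
      have h2 : u.size ≤ (ts i).size * K := ih
      have h3 : (1 + ∑ j, (ts j).size) * K
          = K + (∑ j, (ts j).size) * K := by ring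
      have h4 : (∑ j, (ts j).size) - (ts i).size + (ts i).size * K ≤ (∑ j, (ts j).size) * K := by
        have : (∑ j, (ts j).size) - (ts i).size + (ts i).size ≤ ∑ j, (ts j).size := by omega
        nlinarith [Nat.sub_add_cancel h1]
      omega

end RewLemmas
section DownTheory

variable {C : Type}

theorem fin_uar_none_cases (i : Fin (uar (none : USig C))) :
    i = ⟨0, by simp [uar]⟩ ∨ i = ⟨1, by simp [uar]⟩ := by
  have h2 : i.1 < 2 := i.2
  by_cases h0 : i.1 = 0
  · exact Or.inl (Fin.ext (by exact h0))
  · exact Or.inr (Fin.ext (by show i.1 = 1; omega))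

theorem app_none_eq_appT (ts : Fin (uar (none : USig C)) → ATerm C) :
    Term.app none ts = appT (ts ⟨0, by simp [uar]⟩) (ts ⟨1, by simp [uar]⟩) := by
  unfold appT
  congr 1
  funext i
  rcases fin_uar_none_cases i with h | h <;> rw [h] <;> simp

theorem appT_inj {a b a' b' : ATerm C} (h : appT a b = appT a' b') : a = a' ∧ b = b' := by
  unfold appT at h
  injection h with h1 h2
  constructor
  · have := congrFun h2 ⟨0, by simp [uar]⟩; simpa using this
  · have := congrFun h2 ⟨1, by simp [uar]⟩; simpa using this

theorem app_some_eq_constT (c : C) (ts : Fin (uar (some (c, 0))) → ATerm C) :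
    Term.app (some (c, 0)) ts = constT c := by
  unfold constT
  congr 1
  funext i
  exact absurd i.2 (by simp [uar])

theorem subst_appT (a b : ATerm C) (σ : ℕ → ATerm C) :
    (appT a b).subst σ = appT (a.subst σ) (b.subst σ) := by
  unfold appT
  simp only [Term.subst]
  congr 1
  funext i
  by_cases h0 : i.1 = 0 <;> simp [h0]

theorem subst_constT (c : C) (σ : ℕ → ATerm C) : (constT c).subst σ = constT c := by
  unfold constT
  simp only [Term.subst]
  congr 1
  funext i
  exact absurd i.2 (by simp [uar])

theorem size_appT (a b : ATerm C) : (appT a b).size = 1 + a.size + b.size := by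
  unfold appT
  show 1 + ∑ i : Fin 2, _ = _
  rw [Fin.sum_univ_two]
  simp [Nat.add_assoc]

theorem subst_fiT (c : C) (i : ℕ) (σ : ℕ → ATerm C) :
    (fiT c i).subst σ = Term.app (some (c, i)) (fun j => σ j.1) := rfl

variable (aa : C → ℕ)

/-- One merge step of uncurrying. -/
def merge (x y : ATerm C) : ATerm C :=
  match x with
  | .app (some (c, i)) us =>
      if _ : i < aa c then .app (some (c, i+1)) (Fin.snoc (α := fun _ => ATerm C) us y) else appT x y
  | _ => appT x y

/-- The `U`-normal form. -/
def down : ATerm C → ATerm C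
  | .var x => .var x
  | .app none ts => merge aa (down (ts ⟨0, by simp [uar]⟩)) (down (ts ⟨1, by simp [uar]⟩))
  | .app (some p) ts => .app (some p) (fun i => down (ts i))

theorem merge_pos {c : C} {i : ℕ} (h : i < aa c) (us : Fin (uar (some (c,i))) → ATerm C)
    (y : ATerm C) :
    merge aa (.app (some (c, i)) us) y = .app (some (c, i+1)) (Fin.snoc (α := fun _ => ATerm C) us y) := by
  simp [merge, h]

theorem merge_neg {c : C} {i : ℕ} (h : ¬ i < aa c) (us : Fin (uar (some (c,i))) → ATerm C)
    (y : ATerm C) :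
    merge aa (.app (some (c, i)) us) y = appT (.app (some (c, i)) us) y := by
  simp [merge, h]

theorem merge_none (us : Fin (uar (none : USig C)) → ATerm C) (y : ATerm C) :
    merge aa (.app none us) y = appT (.app none us) y := by
  simp [merge]

theorem merge_var (x : ℕ) (y : ATerm C) :
    merge aa (.var x) y = appT (.var x) y := by
  simp [merge]

theorem merge_is_app (x y : ATerm C) : ∃ g gs, merge aa x y = Term.app g gs := by
  match x with
  | .var v => exact ⟨_, _, merge_var aa v y⟩
  | .app none us => exact ⟨_, _, merge_none aa us y⟩
  | .app (some (c, i)) us =>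
      by_cases h : i < aa c
      · exact ⟨_, _, merge_pos aa h us y⟩
      · exact ⟨_, _, merge_neg aa h us y⟩

theorem down_appT (a b : ATerm C) : down aa (appT a b) = merge aa (down aa a) (down aa b) := by
  show down aa (.app none _) = _
  rw [down]
  congr 1 <;> simp [appT]

theorem down_var (x : ℕ) : down aa (.var x) = .var x := rfl

theorem down_some (p : C × ℕ) (ts : Fin (uar (some p)) → ATerm C) :
    down aa (.app (some p) ts) = .app (some p) (fun i => down aa (ts i)) := by
  rw [down]

theorem down_is_app {t : ATerm C} (h : ∀ x, t ≠ .var x) :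
    ∃ g gs, down aa t = Term.app g gs := by
  match t with
  | .var x => exact absurd rfl (h x)
  | .app none ts =>
      rw [app_none_eq_appT ts, down_appT]
      exact merge_is_app aa _ _
  | .app (some p) ts => exact ⟨_, _, down_some aa p ts⟩

/-- substitution commutes with `Fin.snoc`ed argument vectors -/
theorem snoc_subst {n : ℕ} (us : Fin n → ATerm C) (y : ATerm C) (σ : ℕ → ATerm C) :
    (fun j : Fin (n+1) => (Fin.snoc (α := fun _ => ATerm C) us y j).subst σ)
      = Fin.snoc (α := fun _ => ATerm C) (fun j => (us j).subst σ) (y.subst σ) := by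
  funext j
  induction j using Fin.lastCases with
  | last => simp
  | cast k => simp

theorem merge_subst {x : ATerm C} (y : ATerm C) (σ : ℕ → ATerm C)
    (hx : ∀ v, x ≠ .var v) :
    (merge aa x y).subst σ = merge aa (x.subst σ) (y.subst σ) := by
  match x with
  | .var v => exact absurd rfl (hx v)
  | .app none us =>
      rw [merge_none, subst_appT]
      show _ = merge aa (.app none (fun j => (us j).subst σ)) _
      rw [merge_none]
      rfl
  | .app (some (c, i)) us =>
      by_cases h : i < aa c
      · rw [merge_pos aa h, show (Term.app (some (c,i)) us).subst σ
            = Term.app (some (c,i)) (fun j => (us j).subst σ) from rfl, merge_pos aa h]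
        show Term.app _ _ = _
        congr 1
        exact snoc_subst us y σ
      · rw [merge_neg aa h, subst_appT]
        show _ = merge aa (.app (some (c,i)) (fun j => (us j).subst σ)) _
        rw [merge_neg aa h]
        rfl

/-- The `U`-rule redex/contractum instance. -/
theorem rew_U_merge {c : C} {i : ℕ} (h : i < aa c) (us : Fin (uar (some (c,i))) → ATerm C)
    (y : ATerm C) :
    Rew (USys aa) (appT (.app (some (c, i)) us) y) (.app (some (c, i+1)) (Fin.snoc (α := fun _ => ATerm C) us y)) := by
  classical
  set σ : ℕ → ATerm C := fun x => if hx : x < i then us ⟨x, hx⟩ else y with hσ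
  have h1 : (appT (fiT c i) (.var i)).subst σ = appT (.app (some (c, i)) us) y := by
    rw [subst_appT, subst_fiT]
    congr 1
    · congr 1
      funext j
      have hj : j.1 < i := j.2
      show (if hx : j.1 < i then us ⟨j.1, hx⟩ else y) = us j
      rw [dif_pos hj]
    · show (if hx : i < i then us ⟨i, hx⟩ else y) = y
      rw [dif_neg (by omega)]
  have h2 : (fiT c (i+1)).subst σ = Term.app (some (c, i+1)) (Fin.snoc (α := fun _ => ATerm C) us y) := by
    rw [subst_fiT]
    refine congrArg _ (funext fun j => ?_)
    induction j using Fin.lastCases with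
    | last =>
        show (if hx : i < i then us ⟨i, hx⟩ else y) = _
        rw [dif_neg (by omega)]
        erw [Fin.snoc_last]
    | cast k =>
        have hk : k.1 < i := k.2
        show (if hx : k.1 < i then us ⟨k.1, hx⟩ else y) = _
        rw [dif_pos hk]
        erw [Fin.snoc_castSucc]; rfl
  have := Rew.rule (R := USys aa) (appT (fiT c i) (.var i)) (fiT c (i+1)) σ
    ⟨c, i, h, rfl⟩
  rw [h1, h2] at this
  exact this

theorem rstar_merge (x y : ATerm C) : RStar (USys aa) (appT x y) (merge aa x y) := by
  match x with
  | .var v => rw [merge_var]; exact Relation.ReflTransGen.refl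
  | .app none us => rw [merge_none]; exact Relation.ReflTransGen.refl
  | .app (some (c, i)) us =>
      by_cases h : i < aa c
      · rw [merge_pos aa h]
        exact Relation.ReflTransGen.single (rew_U_merge aa h us y)
      · rw [merge_neg aa h]; exact Relation.ReflTransGen.refl

theorem rstar_appT {ρ : Set (ATerm C × ATerm C)} {a a' b b' : ATerm C}
    (ha : RStar ρ a a') (hb : RStar ρ b b') : RStar ρ (appT a b) (appT a' b') := by
  unfold appT
  apply rstar_args
  intro i
  by_cases h0 : i.1 = 0 <;> simp [h0, ha, hb]

theorem rstar_down (t : ATerm C) : RStar (USys aa) t (down aa t) := by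
  induction t with
  | var x => rw [down_var]; exact Relation.ReflTransGen.refl
  | app f ts ih =>
      match f with
      | none =>
          rw [app_none_eq_appT ts, down_appT]
          exact Relation.ReflTransGen.trans (rstar_appT (ih _) (ih _)) (rstar_merge aa _ _)
      | some p =>
          rw [down_some]
          exact rstar_args _ (fun i => ih i)

end DownTheory
section DownTheory2

variable {C : Type} (aa : C → ℕ)

theorem size_app_update {f : USig C} (ts : Fin (uar f) → ATerm C) (i : Fin (uar f))
    (u : ATerm C) :
    (Term.app f (Function.update ts i u)).size + (ts i).size = (Term.app f ts).size + u.size := by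
  classical
  simp only [Term.size]
  simp only [Function.apply_update (fun _ t => Term.size t) ts i u]
  rw [Finset.sum_update_of_mem (Finset.mem_univ i)]
  rw [Finset.sdiff_singleton_eq_erase]
  have h6 : (ts i).size + ∑ x ∈ Finset.univ.erase i, (ts x).size
      = ∑ k, (ts k).size := by
    simpa using Finset.add_sum_erase Finset.univ (fun k => (ts k).size) (Finset.mem_univ i)
  omega

theorem size_rew_U {a b : ATerm C} (h : Rew (USys aa) a b) : a.size = b.size + 1 := by
  induction h with
  | rule l r σ hmem =>
      obtain ⟨c, i, hlt, hp⟩ := hmem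
      obtain ⟨hl, hr⟩ := Prod.mk.injEq .. ▸ hp
      have hl' : l = appT (fiT c i) (.var i) := by
        have := congrArg Prod.fst hp; simpa using this
      have hr' : r = fiT c (i+1) := by
        have := congrArg Prod.snd hp; simpa using this
      subst hl' hr'
      rw [subst_appT, subst_fiT]
      rw [size_appT]
      show 1 + (1 + ∑ j : Fin i, (σ j.1).size) + (σ i).size
          = (1 + ∑ j : Fin (i+1), (σ j.1).size) + 1
      rw [Fin.sum_univ_castSucc]
      simp only [Fin.coe_castSucc, Fin.val_last]
      omega
  | congr f ts i u hr ih =>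
      have := size_app_update (C := C) ts i u
      omega

theorem size_rstar_U {a b : ATerm C} (h : RStar (USys aa) a b) : b.size ≤ a.size := by
  induction h with
  | refl => exact le_refl _
  | tail _ hstep ih => have := size_rew_U aa hstep; omega

/-- `down` is invariant under U-steps. -/
theorem down_eq_of_rew_U {a b : ATerm C} (h : Rew (USys aa) a b) :
    down aa a = down aa b := by
  induction h with
  | rule l r σ hmem =>
      obtain ⟨c, i, hlt, hp⟩ := hmem
      have hl' : l = appT (fiT c i) (.var i) := by
        have := congrArg Prod.fst hp; simpa using this
      have hr' : r = fiT c (i+1) := by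
        have := congrArg Prod.snd hp; simpa using this
      subst hl' hr'
      rw [subst_appT, subst_fiT, down_appT]
      show merge aa (down aa (.app (some (c,i)) _)) _ = _
      rw [down_some]
      rw [merge_pos aa hlt]
      show _ = down aa (.app (some (c, i+1)) (fun j => σ j.1))
      rw [down_some]
      congr 1
      funext j
      induction j using Fin.lastCases with
      | last => simp [Term.subst]; erw [Fin.snoc_last]
      | cast k => simp; erw [Fin.snoc_castSucc]
  | congr f ts i u hstep ih =>
      match f with
      | none =>
          rw [app_none_eq_appT ts, app_none_eq_appT (Function.update ts i u), down_appT, down_appT]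
          rcases fin_uar_none_cases i with hi | hi <;> subst hi
          · rw [show (Function.update ts _ u) ⟨0, by simp [uar]⟩ = u from by simp,
               show (Function.update ts _ u) ⟨1, by simp [uar]⟩ = ts ⟨1, by simp [uar]⟩ from by
                 rw [Function.update_of_ne (by simp [Fin.ext_iff])], ih]
          · rw [show (Function.update ts _ u) ⟨1, by simp [uar]⟩ = u from by simp,
               show (Function.update ts _ u) ⟨0, by simp [uar]⟩ = ts ⟨0, by simp [uar]⟩ from by
                 rw [Function.update_of_ne (by simp [Fin.ext_iff])], ih]
      | some p =>
          rw [down_some, down_some]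
          congr 1
          funext j
          by_cases hj : j = i
          · subst hj; simp [ih]
          · simp [Function.update_of_ne hj]

theorem down_eq_of_rstar_U {a b : ATerm C} (h : RStar (USys aa) a b) :
    down aa a = down aa b := by
  induction h with
  | refl => rfl
  | tail _ hstep ih => exact ih.trans (down_eq_of_rew_U aa hstep)

theorem down_down (t : ATerm C) : down aa (down aa t) = down aa t :=
  (down_eq_of_rstar_U aa (rstar_down aa t)).symm

theorem nf_down (t : ATerm C) : NF (USys aa) (down aa t) := by
  intro u hu
  have h1 : down aa u = down aa (down aa t) := (down_eq_of_rew_U aa hu).symm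
  rw [down_down] at h1
  have h2 : (down aa t).size = u.size + 1 := size_rew_U aa hu
  have h3 : (down aa u).size ≤ u.size := size_rstar_U aa (rstar_down aa u)
  rw [h1] at h3
  omega

theorem down_fold (a : ATerm C) (l : List (ATerm C)) :
    down aa (l.foldl appT a) = (l.map (down aa)).foldl (merge aa) (down aa a) := by
  induction l generalizing a with
  | nil => rfl
  | cons x xs ih =>
      simp only [List.foldl_cons, List.map_cons]
      rw [ih, down_appT]

theorem hc_appT (a b : ATerm C) :
    headCount (appT a b) = (headCount a).map (fun p => (p.1, p.2 + 1)) := by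
  show headCount (.app none _) = _
  rw [headCount]
  congr 2

theorem down_headCount {t : ATerm C} {c : C} {m : ℕ} (hhc : headCount t = some (c, m))
    (hm : m ≤ aa c) : ∃ us, down aa t = Term.app (some (c, m)) us := by
  induction t generalizing m with
  | var x => rw [headCount] at hhc; exact absurd hhc (by simp)
  | app f ts ih =>
      match f with
      | none =>
          rw [app_none_eq_appT ts, hc_appT] at hhc
          rw [app_none_eq_appT ts, down_appT]
          rcases Option.map_eq_some_iff.mp hhc with ⟨⟨c', m'⟩, hc', he⟩
          have hc2 : c' = c ∧ m' + 1 = m := by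
            constructor <;> [exact congrArg Prod.fst he; exact congrArg Prod.snd he]
          obtain ⟨rfl, hm'⟩ := hc2
          obtain ⟨us, hus⟩ := ih _ hc' (by omega)
          subst hm'
          rw [hus, merge_pos aa (by omega)]
          exact ⟨_, rfl⟩
      | some (c', 0) =>
          rw [headCount] at hhc
          have : c' = c ∧ 0 = m := by
            have h1 := congrArg (fun o => Option.map Prod.fst o) hhc
            have h2 := congrArg (fun o => Option.map Prod.snd o) hhc
            simp at h1 h2
            exact ⟨h1, h2⟩
          obtain ⟨rfl, hm0⟩ := this
          subst hm0
          exact ⟨_, by rw [down_some]⟩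
      | some (c', n'+1) =>
          rw [headCount] at hhc
          exact absurd hhc (by simp)

end DownTheory2
section DownTheory3

variable {C : Type} (aa : C → ℕ)

theorem hvf_subterm {t u : ATerm C} (h : HeadVarFree t) (hu : Subterm u t) :
    HeadVarFree u := fun v hv x w => h v (Subterm.trans hv hu) x w

theorem applicativeT_subterm {t u : ATerm C} (h : ApplicativeT t) (hu : Subterm u t) :
    ApplicativeT u := fun v f ts hv he => h v f ts (Subterm.trans hv hu) he

theorem applicativeT_good {t : ATerm C} (h : ApplicativeT t) : GoodTerm aa t := by
  intro u f ts hsub he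
  have := h u f ts hsub he
  match f with
  | none => trivial
  | some (c, i) =>
      have : i = 0 := this
      subst this
      exact Nat.zero_le _

theorem subterm_appT_left (a b : ATerm C) : Subterm a (appT a b) := by
  unfold appT
  exact Subterm.app _ _ ⟨0, by simp [uar]⟩ _ (by simpa using Subterm.refl a)

theorem subterm_appT_right (a b : ATerm C) : Subterm b (appT a b) := by
  unfold appT
  exact Subterm.app _ _ ⟨1, by simp [uar]⟩ _ (by simpa using Subterm.refl b)

theorem hvf_head_not_var {ts : Fin (uar (none : USig C)) → ATerm C}
    (h : HeadVarFree (.app none ts)) : ∀ x, ts ⟨0, by simp [uar]⟩ ≠ .var x := by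
  intro x hx
  refine h (.app none ts) (Subterm.refl _) x (ts ⟨1, by simp [uar]⟩) ?_
  rw [app_none_eq_appT ts, hx]

theorem down_subst_hvf {t : ATerm C} (σ : ℕ → ATerm C) (h : HeadVarFree t) :
    down aa (t.subst σ) = (down aa t).subst (fun x => down aa (σ x)) := by
  induction t with
  | var x => rfl
  | app f ts ih =>
      match f with
      | none =>
          have hsub0 : Subterm (ts ⟨0, by simp [uar]⟩) (.app none ts) :=
            Subterm.app _ _ _ _ (Subterm.refl _)
          have hsub1 : Subterm (ts ⟨1, by simp [uar]⟩) (.app none ts) :=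
            Subterm.app _ _ _ _ (Subterm.refl _)
          have hnv := hvf_head_not_var h
          rw [app_none_eq_appT ts, subst_appT, down_appT, down_appT]
          rw [ih _ (hvf_subterm h hsub0), ih _ (hvf_subterm h hsub1)]
          rw [merge_subst]
          intro v hv
          obtain ⟨g, gs, hg⟩ := down_is_app aa (t := ts ⟨0, by simp [uar]⟩) hnv
          rw [hg] at hv
          exact absurd hv (by intro he; cases he)
      | some p =>
          show down aa (Term.app (some p) (fun i => (ts i).subst σ))
              = ((down aa (Term.app (some p) ts)).subst _)
          rw [down_some, down_some]
          show Term.app (some p) _ = Term.app (some p) _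
          congr 1
          funext i
          exact ih i (hvf_subterm h (Subterm.app _ _ i _ (Subterm.refl _)))

theorem merge_eq_appT_of_not {x : ATerm C}
    (h : ¬ ∃ c i us, x = Term.app (some (c,i)) us ∧ i < aa c) (y : ATerm C) :
    merge aa x y = appT x y := by
  match x with
  | .var v => exact merge_var aa v y
  | .app none us => exact merge_none aa us y
  | .app (some (c, i)) us =>
      by_cases hlt : i < aa c
      · exact absurd ⟨c, i, us, rfl, hlt⟩ h
      · exact merge_neg aa hlt us y

theorem rstar_snoc {ρ : Set (ATerm C × ATerm C)} {n : ℕ}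
    {us us' : Fin n → ATerm C} {y y' : ATerm C}
    (h : ∀ j, RStar ρ (us j) (us' j)) (hy : RStar ρ y y') (j : Fin (n+1)) :
    RStar ρ (Fin.snoc (α := fun _ => ATerm C) us y j) (Fin.snoc (α := fun _ => ATerm C) us' y' j) := by
  induction j using Fin.lastCases with
  | last => simpa using hy
  | cast k => simpa using h k

/-- L7: the uncurried instance of the uncurried term rewrites to the
uncurried instance. -/
theorem down_subst_star (t : ATerm C) (σ : ℕ → ATerm C) :
    RStar (USys aa) ((down aa t).subst (fun x => down aa (σ x))) (down aa (t.subst σ)) := by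
  induction t with
  | var x => exact Relation.ReflTransGen.refl
  | app f ts ih =>
      match f with
      | none =>
          set a := ts ⟨0, by simp [uar]⟩ with ha
          set b := ts ⟨1, by simp [uar]⟩ with hb
          rw [app_none_eq_appT ts, subst_appT, down_appT, down_appT]
          by_cases hm : ∃ c i us, down aa a = Term.app (some (c,i)) us ∧ i < aa c
          · obtain ⟨c, i, us, hus, hlt⟩ := hm
            rw [hus, merge_pos aa hlt]
            have hsubst : (Term.app (some (c, i+1))
                (Fin.snoc (α := fun _ => ATerm C) us (down aa b))).subst
                  (fun x => down aa (σ x))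
                = Term.app (some (c, i+1)) (Fin.snoc (α := fun _ => ATerm C)
                    (fun j => (us j).subst (fun x => down aa (σ x)))
                    ((down aa b).subst (fun x => down aa (σ x)))) := by
              show Term.app _ _ = _
              congr 1
              exact snoc_subst us (down aa b) _
            erw [hsubst]
            -- compute `down (a.subst σ)`
            have hda : down aa (a.subst σ)
                = Term.app (some (c, i)) (fun j => down aa ((us j).subst (fun x => down aa (σ x)))) := by
              have h1 : down aa (a.subst σ) = down aa ((down aa a).subst (fun x => down aa (σ x))) := by
                have h2 := ih ⟨0, by simp [uar]⟩
                rw [← ha] at h2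
                have := down_eq_of_rstar_U aa h2
                rw [this, down_down]
              rw [h1, hus]
              show down aa (Term.app (some (c,i)) _) = _
              rw [down_some]
            rw [hda, merge_pos aa hlt]
            apply rstar_args
            intro j
            apply rstar_snoc
            · intro k
              exact rstar_down aa _
            · have h2 := ih ⟨1, by simp [uar]⟩
              rw [← hb] at h2
              exact h2
          · rw [merge_eq_appT_of_not aa hm, subst_appT]
            have h0 := ih ⟨0, by simp [uar]⟩
            have h1 := ih ⟨1, by simp [uar]⟩
            rw [← ha] at h0
            rw [← hb] at h1
            exact Relation.ReflTransGen.trans (rstar_appT h0 h1) (rstar_merge aa _ _)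
      | some p =>
          show RStar _ ((Term.app (some p) (fun i => down aa (ts i))).subst _)
              (down aa (Term.app (some p) (fun i => (ts i).subst σ)))
          rw [down_some]
          show RStar _ (Term.app (some p) _) (Term.app (some p) _)
          exact rstar_args _ (fun i => ih i)

end DownTheory3

section FoldMachinery

variable {C : Type} (aa : C → ℕ)

theorem appT_update0 (p q c : ATerm C) :
    Function.update (fun i : Fin (uar (none : USig C)) => if i.1 = 0 then p else c)
      ⟨0, by simp [uar]⟩ q = (fun i => if i.1 = 0 then q else c) := by
  funext i
  rcases fin_uar_none_cases i with h | h <;> subst h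
  · simp
  · rw [Function.update_of_ne (by simp [Fin.ext_iff])]
    simp

theorem appT_update1 (a x y : ATerm C) :
    Function.update (fun i : Fin (uar (none : USig C)) => if i.1 = 0 then a else x)
      ⟨1, by simp [uar]⟩ y = (fun i => if i.1 = 0 then a else y) := by
  funext i
  rcases fin_uar_none_cases i with h | h <;> subst h
  · rw [Function.update_of_ne (by simp [Fin.ext_iff])]
    simp
  · simp

theorem rew_appT_left {ρ : Set (ATerm C × ATerm C)} {p q : ATerm C} (c : ATerm C)
    (h : Rew ρ p q) : Rew ρ (appT p c) (appT q c) := by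
  have := Rew.congr (R := ρ) none (fun i : Fin (uar (none : USig C)) => if i.1 = 0 then p else c)
    ⟨0, by simp [uar]⟩ q (by simpa using h)
  rw [appT_update0] at this
  exact this

theorem rew_appT_right {ρ : Set (ATerm C × ATerm C)} {x y : ATerm C} (a : ATerm C)
    (h : Rew ρ x y) : Rew ρ (appT a x) (appT a y) := by
  have := Rew.congr (R := ρ) none (fun i : Fin (uar (none : USig C)) => if i.1 = 0 then a else x)
    ⟨1, by simp [uar]⟩ y (by simpa using h)
  rw [appT_update1] at this
  exact this

theorem foldl_appT_acc_rew {ρ : Set (ATerm C × ATerm C)} {p q : ATerm C}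
    (cs : List (ATerm C)) (h : Rew ρ p q) :
    Rew ρ (cs.foldl appT p) (cs.foldl appT q) := by
  induction cs generalizing p q with
  | nil => exact h
  | cons c cs ih => exact ih (rew_appT_left c h)

theorem foldl_appT_rstar {ρ : Set (ATerm C × ATerm C)} {p q : ATerm C}
    {g : ATerm C → ATerm C} (cs : List (ATerm C)) (hp : RStar ρ p q)
    (hcs : ∀ x ∈ cs, RStar ρ x (g x)) :
    RStar ρ (cs.foldl appT p) ((cs.map g).foldl appT q) := by
  induction cs generalizing p q with
  | nil => exact hp
  | cons c cs ih =>
      simp only [List.foldl_cons, List.map_cons]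
      exact ih (rstar_appT hp (hcs c (by simp))) (fun x hx => hcs x (by simp [hx]))

/-- a step strictly inside one argument of a root application -/
def InnerStep (ρ : Set (ATerm C × ATerm C)) (p q : ATerm C) : Prop :=
  ∃ f ts i u, p = Term.app f ts ∧ q = Term.app f (Function.update ts i u) ∧ Rew ρ (ts i) u

theorem innerStep_rew {ρ : Set (ATerm C × ATerm C)} {p q : ATerm C}
    (h : InnerStep ρ p q) : Rew ρ p q := by
  obtain ⟨f, ts, i, u, rfl, rfl, hr⟩ := h
  exact Rew.congr f ts i u hr

theorem innerStep_merge {ρ : Set (ATerm C × ATerm C)} {p q : ATerm C} (c : ATerm C)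
    (h : InnerStep ρ p q) : InnerStep ρ (merge aa p c) (merge aa q c) := by
  obtain ⟨f, ts, i, u, rfl, rfl, hr⟩ := h
  match f with
  | none =>
      rw [merge_none, merge_none]
      refine ⟨none, (fun j : Fin (uar (none : USig C)) =>
        if j.1 = 0 then Term.app none ts else c), ⟨0, by simp [uar]⟩,
        Term.app none (Function.update ts i u), rfl, ?_, ?_⟩
      · rw [appT_update0]; rfl
      · simpa using Rew.congr none ts i u hr
  | some (c0, i0) =>
      by_cases hlt : i0 < aa c0
      · rw [merge_pos aa hlt, merge_pos aa hlt]
        refine ⟨some (c0, i0 + 1), Fin.snoc (α := fun _ => ATerm C) ts c, Fin.castSucc i, u, rfl, ?_, ?_⟩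
        · erw [Fin.snoc_update]; rfl
        · erw [Fin.snoc_castSucc]; exact hr
      · rw [merge_neg aa hlt, merge_neg aa hlt]
        refine ⟨none, (fun j : Fin (uar (none : USig C)) =>
          if j.1 = 0 then Term.app (some (c0,i0)) ts else c), ⟨0, by simp [uar]⟩,
          Term.app (some (c0,i0)) (Function.update ts i u), rfl, ?_, ?_⟩
        · rw [appT_update0]; rfl
        · simpa using Rew.congr (some (c0,i0)) ts i u hr

theorem innerStep_foldl {ρ : Set (ATerm C × ATerm C)} {p q : ATerm C}
    (cs : List (ATerm C)) (h : InnerStep ρ p q) :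
    Rew ρ (cs.foldl (merge aa) p) (cs.foldl (merge aa) q) := by
  induction cs generalizing p q with
  | nil => exact innerStep_rew h
  | cons c cs ih => exact ih (innerStep_merge aa c h)

theorem fold_arg_tg {ρ : Set (ATerm C × ATerm C)} {x y : ATerm C}
    (h : Relation.TransGen (Rew ρ) x y) (f : USig C) (ts : Fin (uar f) → ATerm C)
    (i : Fin (uar f)) (cs : List (ATerm C)) :
    Relation.TransGen (Rew ρ)
      (cs.foldl (merge aa) (.app f (Function.update ts i x)))
      (cs.foldl (merge aa) (.app f (Function.update ts i y))) := by
  induction h with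
  | single hs =>
      refine Relation.TransGen.single (innerStep_foldl aa cs ?_)
      exact ⟨f, Function.update ts i x, i, _, rfl, by rw [Function.update_idem], by simpa using hs⟩
  | tail hab hbc ih =>
      refine Relation.TransGen.tail ih (innerStep_foldl aa cs ?_)
      exact ⟨f, Function.update ts i _, i, _, rfl, by rw [Function.update_idem], by simpa using hbc⟩

theorem foldl_merge_none (cs : List (ATerm C)) (gs : Fin (uar (none : USig C)) → ATerm C) :
    cs.foldl (merge aa) (.app none gs) = cs.foldl appT (.app none gs) := by
  induction cs generalizing gs with
  | nil => rfl
  | cons c cs ih =>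
      simp only [List.foldl_cons]
      rw [merge_none]
      exact ih _

theorem foldl_merge_full {c0 : C} {i0 : ℕ} (hlt : ¬ i0 < aa c0) (cs : List (ATerm C))
    (gs : Fin (uar (some (c0, i0))) → ATerm C) :
    cs.foldl (merge aa) (.app (some (c0,i0)) gs) = cs.foldl appT (.app (some (c0,i0)) gs) := by
  match cs with
  | [] => rfl
  | c :: cs =>
      simp only [List.foldl_cons]
      rw [merge_neg aa hlt]
      exact foldl_merge_none aa cs _

end FoldMachinery
section EtaTheory

variable {C : Type}

/-- strict bound on variables occurring in a term -/
def vbound : ATerm C → ℕ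
  | .var x => x + 1
  | .app _ ts => Finset.univ.sup (fun i => vbound (ts i))

theorem subterm_var_lt {t : ATerm C} {x : ℕ} (h : Subterm (.var x) t) : x < vbound t := by
  induction t with
  | var y => cases h; simp [vbound]
  | app f ts ih =>
      rcases subterm_app_inv h with h' | ⟨i, hi⟩
      · exact absurd h' (by intro he; cases he)
      · have h1 : x < vbound (ts i) := ih i hi
        have h2 : vbound (ts i) ≤ vbound (.app f ts) := by
          rw [show vbound (.app f ts) = ((Finset.univ.sup (fun j => vbound (ts j)) : ℕ)) from rfl]
          exact Finset.le_sup (f := fun j => (vbound (ts j) : ℕ)) (Finset.mem_univ i)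
        omega

theorem vbound_appT (a b : ATerm C) : vbound (appT a b) = max (vbound a) (vbound b) := by
  show Finset.univ.sup _ = _
  apply le_antisymm
  · apply Finset.sup_le
    intro i _
    rcases fin_uar_none_cases i with h | h <;> subst h <;> simp [appT]
  · apply max_le
    · have := Finset.le_sup (f := fun i : Fin (uar (none : USig C)) =>
        vbound (if i.1 = 0 then a else b)) (Finset.mem_univ ⟨0, by simp [uar]⟩)
      simpa [appT] using this
    · have := Finset.le_sup (f := fun i : Fin (uar (none : USig C)) =>
        vbound (if i.1 = 0 then a else b)) (Finset.mem_univ ⟨1, by simp [uar]⟩)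
      simpa [appT] using this

theorem applicativeT_var (x : ℕ) : ApplicativeT (.var x : ATerm C) := by
  intro u f ts hsub he
  cases hsub
  cases he

theorem applicativeT_appT {a b : ATerm C} (ha : ApplicativeT a) (hb : ApplicativeT b) :
    ApplicativeT (appT a b) := by
  intro u f ts hsub he
  unfold appT at hsub
  rcases subterm_app_inv hsub with h' | ⟨i, hi⟩
  · subst h'
    injection he with h1 h2
    subst h1
    trivial
  · by_cases h0 : i.1 = 0
    · have : i = ⟨0, by simp [uar]⟩ := Fin.ext h0
      subst this
      exact ha u f ts (by simpa using hi) he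
    · have h2 : i.1 < 2 := i.2
      have : i = ⟨1, by simp [uar]⟩ := Fin.ext (by show i.1 = 1; omega)
      subst this
      exact hb u f ts (by simpa using hi) he

theorem hvf_appT_var {a : ATerm C} (ha : HeadVarFree a) (hnv : ∀ x, a ≠ .var x) (y : ℕ) :
    HeadVarFree (appT a (.var y)) := by
  intro u hsub x v hne
  unfold appT at hsub
  rcases subterm_app_inv hsub with h' | ⟨i, hi⟩
  · subst h'
    have := (appT_inj hne).1
    exact hnv x this
  · by_cases h0 : i.1 = 0
    · have : i = ⟨0, by simp [uar]⟩ := Fin.ext h0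
      subst this
      exact ha u (by simpa using hi) x v hne
    · have h2 : i.1 < 2 := i.2
      have : i = ⟨1, by simp [uar]⟩ := Fin.ext (by show i.1 = 1; omega)
      subst this
      simp only [show ((if (1:ℕ) = 0 then a else Term.var y)) = Term.var y from rfl] at hi
      have : u = Term.var y := by
        cases (by simpa using hi : Subterm u (Term.var y)) with
        | refl => rfl
      subst this
      cases hne

/-- headCount is defined on non-variable applicative head-variable-free terms -/
theorem hc_exists {l : ATerm C} (hA : ApplicativeT l) (hH : HeadVarFree l)
    (hnv : ∀ x, l ≠ .var x) : ∃ c n, headCount l = some (c, n) := by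
  induction l with
  | var x => exact absurd rfl (hnv x)
  | app f ts ih =>
      match f with
      | none =>
          have hnv0 := hvf_head_not_var hH
          have hsub0 : Subterm (ts ⟨0, by simp [uar]⟩) (.app none ts) :=
            Subterm.app _ _ _ _ (Subterm.refl _)
          obtain ⟨c, n, hcn⟩ := ih ⟨0, by simp [uar]⟩
            (applicativeT_subterm hA hsub0) (hvf_subterm hH hsub0) hnv0
          refine ⟨c, n + 1, ?_⟩
          rw [headCount, hcn]
          rfl
      | some (c, i) =>
          have : ApplicativeSym (some (c, i)) := hA _ _ ts (Subterm.refl _) rfl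
          have hi : i = 0 := this
          subst hi
          exact ⟨c, 0, by rw [headCount]⟩

/-- `m`-fold eta expansion of a rule with fresh variables `N, N+1, …` -/
def etaExp (l r : ATerm C) (N : ℕ) : ℕ → ATerm C × ATerm C
  | 0 => (l, r)
  | m+1 => (appT (etaExp l r N m).1 (.var (N+m)), appT (etaExp l r N m).2 (.var (N+m)))

theorem etaExp_hc {l r : ATerm C} {c : C} {n : ℕ} (hhc : headCount l = some (c, n))
    (N : ℕ) (m : ℕ) : headCount (etaExp l r N m).1 = some (c, n + m) := by
  induction m with
  | zero => exact hhc
  | succ m ih =>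
      show headCount (appT _ _) = _
      rw [hc_appT, ih]
      rfl

theorem etaExp_vbound1 {l r : ATerm C} {N : ℕ} (hN : vbound l ≤ N) (m : ℕ) :
    vbound (etaExp l r N m).1 ≤ N + m := by
  induction m with
  | zero => exact hN
  | succ m ih =>
      show vbound (appT _ _) ≤ _
      rw [vbound_appT]
      refine max_le (by omega) ?_
      show N + m + 1 ≤ N + (m+1)
      omega

theorem etaExp_vbound2 {l r : ATerm C} {N : ℕ} (hN : vbound r ≤ N) (m : ℕ) :
    vbound (etaExp l r N m).2 ≤ N + m := by
  induction m with
  | zero => exact hN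
  | succ m ih =>
      show vbound (appT _ _) ≤ _
      rw [vbound_appT]
      refine max_le (by omega) ?_
      show N + m + 1 ≤ N + (m+1)
      omega

theorem etaExp_nonvar {l r : ATerm C} {N : ℕ} (hnv : ∀ x, l ≠ .var x) (m : ℕ) :
    ∀ x, (etaExp l r N m).1 ≠ .var x := by
  match m with
  | 0 => exact hnv
  | m+1 =>
      intro x he
      cases he

theorem etaExp_hvf {l r : ATerm C} {N : ℕ} (hH : HeadVarFree l) (hnv : ∀ x, l ≠ .var x)
    (m : ℕ) : HeadVarFree (etaExp l r N m).1 := by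
  induction m with
  | zero => exact hH
  | succ m ih => exact hvf_appT_var ih (etaExp_nonvar hnv m) _

theorem etaExp_appl1 {l r : ATerm C} {N : ℕ} (hA : ApplicativeT l) (m : ℕ) :
    ApplicativeT (etaExp l r N m).1 := by
  induction m with
  | zero => exact hA
  | succ m ih => exact applicativeT_appT ih (applicativeT_var _)

theorem etaExp_appl2 {l r : ATerm C} {N : ℕ} (hA : ApplicativeT r) (m : ℕ) :
    ApplicativeT (etaExp l r N m).2 := by
  induction m with
  | zero => exact hA
  | succ m ih => exact applicativeT_appT ih (applicativeT_var _)

theorem etaExp_eta {aa : C → ℕ} {R : Set (ATerm C × ATerm C)} {l r : ATerm C}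
    (hmem : (l, r) ∈ R) {c : C} {n : ℕ} (hhc : headCount l = some (c, n))
    {N : ℕ} (hNl : vbound l ≤ N) (hNr : vbound r ≤ N) :
    ∀ m, n + m ≤ aa c → Eta aa R (etaExp l r N m) := by
  intro m
  induction m with
  | zero => intro _; exact Eta.base _ hmem
  | succ m ih =>
      intro hm
      show Eta aa R (appT (etaExp l r N m).1 (.var (N+m)), appT (etaExp l r N m).2 (.var (N+m)))
      have h1 : Eta aa R ((etaExp l r N m).1, (etaExp l r N m).2) := by
        have := ih (by omega)
        simpa using this
      refine Eta.eta _ _ c (n + m) (N + m) h1 (etaExp_hc hhc N m) (by omega) ?_ ?_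
      · intro hsub
        have := subterm_var_lt hsub
        have := etaExp_vbound1 (r := r) hNl m
        omega
      · intro hsub
        have := subterm_var_lt hsub
        have := etaExp_vbound2 (l := l) hNr m
        omega

theorem rstar_subst {ρ : Set (ATerm C × ATerm C)} {a b : ATerm C}
    (h : RStar ρ a b) (δ : ℕ → ATerm C) : RStar ρ (a.subst δ) (b.subst δ) := by
  induction h with
  | refl => exact Relation.ReflTransGen.refl
  | tail _ hstep ih => exact Relation.ReflTransGen.tail ih (rew_subst hstep δ)

theorem rstar_subst_par {ρ : Set (ATerm C × ATerm C)} {σ τ : ℕ → ATerm C}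
    (h : ∀ x, RStar ρ (σ x) (τ x)) (t : ATerm C) :
    RStar ρ (t.subst σ) (t.subst τ) := by
  induction t with
  | var x => exact h x
  | app f ts ih =>
      show RStar ρ (.app f fun i => (ts i).subst σ) (.app f fun i => (ts i).subst τ)
      exact rstar_args f ih

end EtaTheory
section MainSim

variable {C : Type}

theorem update_snoc_last {n : ℕ} (us : Fin n → ATerm C) (w z : ATerm C) :
    Function.update (Fin.snoc (α := fun _ => ATerm C) us w) (Fin.last n) z
      = Fin.snoc (α := fun _ => ATerm C) us z := by
  funext j
  induction j using Fin.lastCases with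
  | last => simp
  | cast k =>
      rw [Function.update_of_ne (Fin.ne_last_of_lt (Fin.castSucc_lt_last k))]
      simp

theorem merge_as_update (aa : C → ℕ) (d : ATerm C) :
    ∃ g base k, ∀ z : ATerm C, merge aa d z = Term.app g (Function.update base k z) := by
  match d with
  | .var v =>
      refine ⟨none, (fun i : Fin (uar (none : USig C)) =>
        if i.1 = 0 then Term.var v else Term.var v), ⟨1, by simp [uar]⟩, fun z => ?_⟩
      rw [merge_var, appT_update1]
      rfl
  | .app none us =>
      refine ⟨none, (fun i : Fin (uar (none : USig C)) =>
        if i.1 = 0 then Term.app none us else Term.app none us), ⟨1, by simp [uar]⟩, fun z => ?_⟩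
      rw [merge_none, appT_update1]
      rfl
  | .app (some (c0, i0)) us =>
      by_cases hlt : i0 < aa c0
      · refine ⟨some (c0, i0 + 1), Fin.snoc (α := fun _ => ATerm C) us (Term.var 0), Fin.last i0, fun z => ?_⟩
        rw [merge_pos aa hlt]; erw [update_snoc_last]
      · refine ⟨none, (fun i : Fin (uar (none : USig C)) =>
          if i.1 = 0 then Term.app (some (c0,i0)) us else Term.var 0), ⟨1, by simp [uar]⟩,
          fun z => ?_⟩
        rw [merge_neg aa hlt, appT_update1]
        rfl

theorem main_sim {R : Set (ATerm C × ATerm C)} {aa : C → ℕ}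
    (hR : IsATRS R) (hl : LHVF R) (haa : AASpec R aa)
    {s t : ATerm C} (h : Rew R s t) :
    ∀ bs : List (ATerm C),
      Relation.TransGen (Rew (UD aa R))
        (down aa (bs.foldl appT s)) (down aa (bs.foldl appT t)) := by
  induction h with
  | rule l r σ hmem =>
      intro bs
      have hprops := hR (l, r) hmem
      have hA : ApplicativeT l := hprops.2.2.1
      have hAr : ApplicativeT r := hprops.2.2.2
      have hH : HeadVarFree l := hl (l, r) hmem
      have hnv : ∀ x, l ≠ .var x := fun x => hprops.1 x
      obtain ⟨c, n, hhc⟩ := hc_exists hA hH hnv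
      have hn : n ≤ aa c := (haa c).1 n ⟨(l, r), hmem, l, Or.inl (Subterm.refl l), hhc⟩
      set N := max (vbound l) (vbound r) with hN
      have hNl : vbound l ≤ N := le_max_left _ _
      have hNr : vbound r ≤ N := le_max_right _ _
      set j := min (aa c - n) bs.length with hj
      have hjlen : j ≤ bs.length := min_le_right _ _
      have hnj : n + j ≤ aa c := by
        have := min_le_left (aa c - n) bs.length
        omega
      set lj := (etaExp l r N j).1 with hlj
      set rj := (etaExp l r N j).2 with hrj
      set σ' : ℕ → ATerm C :=
        fun x => if N ≤ x ∧ x < N + j then bs.getD (x - N) (.var 0) else σ x with hσ'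
      have hσlow : ∀ x, x < N → σ' x = σ x := by
        intro x hx
        rw [hσ']
        simp only
        rw [if_neg (by omega)]
      have hσhigh : ∀ m, m < j → σ' (N + m) = bs.getD m (.var 0) := by
        intro m hm
        rw [hσ']
        simp only
        rw [if_pos (by omega)]
        congr 1
        omega
      -- substituted eta-expansions
      have hsub : ∀ m, m ≤ j →
          ((etaExp l r N m).1.subst σ' = (bs.take m).foldl appT (l.subst σ) ∧
           (etaExp l r N m).2.subst σ' = (bs.take m).foldl appT (r.subst σ)) := by
        intro m
        induction m with
        | zero =>
            intro _
            constructor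
            · show l.subst σ' = l.subst σ
              apply subst_ext
              intro x hx
              exact hσlow x (by have := subterm_var_lt hx; omega)
            · show r.subst σ' = r.subst σ
              apply subst_ext
              intro x hx
              exact hσlow x (by have := subterm_var_lt hx; omega)
        | succ m ih =>
            intro hm
            have hmj : m < j := by omega
            have hmlen : m < bs.length := by omega
            obtain ⟨ih1, ih2⟩ := ih (by omega)
            have hvar : (Term.var (N + m) : ATerm C).subst σ' = bs[m] := by
              show σ' (N + m) = _
              rw [hσhigh m hmj]
              exact List.getD_eq_getElem bs _ hmlen
            have htake : bs.take (m+1) = bs.take m ++ [bs[m]] := by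
              rw [List.take_succ, List.getElem?_eq_getElem hmlen]
              rfl
            constructor
            · show (appT (etaExp l r N m).1 (.var (N+m))).subst σ' = _
              rw [subst_appT, ih1, hvar, htake, List.foldl_append]
              rfl
            · show (appT (etaExp l r N m).2 (.var (N+m))).subst σ' = _
              rw [subst_appT, ih2, hvar, htake, List.foldl_append]
              rfl
      have hB : bs.foldl appT (l.subst σ) = (bs.drop j).foldl appT (lj.subst σ') := by
        rw [hlj, (hsub j (le_refl j)).1, ← List.foldl_append, List.take_append_drop]
      have hBr : bs.foldl appT (r.subst σ) = (bs.drop j).foldl appT (rj.subst σ') := by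
        rw [hrj, (hsub j (le_refl j)).2, ← List.foldl_append, List.take_append_drop]
      -- shape of the uncurried left-hand side
      have hdlj : down aa (lj.subst σ')
          = (down aa lj).subst (fun x => down aa (σ' x)) :=
        down_subst_hvf aa σ' (etaExp_hvf hH hnv j)
      obtain ⟨us, hus⟩ := down_headCount aa (etaExp_hc hhc N j) hnj
      have hshape : down aa (bs.foldl appT (l.subst σ))
          = ((bs.drop j).map (down aa)).foldl appT
              ((down aa lj).subst (fun x => down aa (σ' x))) := by
        rw [hB, down_fold, hdlj, hus]
        show ((bs.drop j).map (down aa)).foldl (merge aa)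
            (Term.app (some (c, n+j)) (fun k => (us k).subst _)) = _
        cases hdrop : bs.drop j with
        | nil => rfl
        | cons b bs' =>
            have hlt : j < bs.length := by
              by_contra hge
              rw [List.drop_eq_nil_of_le (by omega)] at hdrop
              cases hdrop
            have hjval : j = aa c - n := by
              rw [hj, min_eq_left (by omega)]
            have hfull : ¬ (n + j) < aa c := by omega
            exact foldl_merge_full aa hfull _ _
      -- the η-rule in U↓(R)
      have hmemUD : ((down aa lj), (down aa rj)) ∈ UD aa R := by
        left
        refine ⟨lj, rj, ?_, ⟨rstar_down aa lj, nf_down aa lj⟩, ⟨rstar_down aa rj, nf_down aa rj⟩⟩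
        have := etaExp_eta (aa := aa) hmem hhc hNl hNr j hnj
        rw [hlj, hrj]
        simpa using this
      have hstep : Rew (UD aa R) ((down aa lj).subst (fun x => down aa (σ' x)))
          ((down aa rj).subst (fun x => down aa (σ' x))) :=
        Rew.rule _ _ _ hmemUD
      have hstep2 : Rew (UD aa R) (down aa (bs.foldl appT (l.subst σ)))
          (((bs.drop j).map (down aa)).foldl appT
            ((down aa rj).subst (fun x => down aa (σ' x)))) := by
        rw [hshape]
        exact foldl_appT_acc_rew _ hstep
      -- the tail
      have hp : RStar (USys aa) (rj.subst σ')
          ((down aa rj).subst (fun x => down aa (σ' x))) := by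
        refine Relation.ReflTransGen.trans (rstar_subst (rstar_down aa rj) σ') ?_
        exact rstar_subst_par (fun x => rstar_down aa (σ' x)) (down aa rj)
      have hstar : RStar (USys aa) (bs.foldl appT (r.subst σ))
          (((bs.drop j).map (down aa)).foldl appT
            ((down aa rj).subst (fun x => down aa (σ' x)))) := by
        rw [hBr]
        exact foldl_appT_rstar _ hp (fun x _ => rstar_down aa x)
      have heq : down aa (((bs.drop j).map (down aa)).foldl appT
            ((down aa rj).subst (fun x => down aa (σ' x))))
          = down aa (bs.foldl appT (r.subst σ)) :=
        (down_eq_of_rstar_U aa hstar).symm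
      have htail : RStar (UD aa R) (((bs.drop j).map (down aa)).foldl appT
            ((down aa rj).subst (fun x => down aa (σ' x))))
          (down aa (bs.foldl appT (r.subst σ))) := by
        rw [← heq]
        exact Relation.ReflTransGen.mono (fun _ _ hab => rew_mono Set.subset_union_right hab) _ _
          (rstar_down aa _)
      exact Relation.TransGen.head' hstep2 htail
  | congr f ts i u hstep ih =>
      intro bs
      match f, ts, i, ih with
      | none, ts, i, ih =>
          rcases fin_uar_none_cases i with hi | hi <;> subst hi
          · rw [app_none_eq_appT ts, app_none_eq_appT (Function.update ts _ u)]
            rw [show Function.update ts ⟨0, by simp [uar]⟩ u ⟨0, by simp [uar]⟩ = u from by simp,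
                show Function.update ts ⟨0, by simp [uar]⟩ u ⟨1, by simp [uar]⟩
                  = ts ⟨1, by simp [uar]⟩ from by
                  rw [Function.update_of_ne (by simp [Fin.ext_iff])]]
            exact ih (ts ⟨1, by simp [uar]⟩ :: bs)
          · rw [app_none_eq_appT ts, app_none_eq_appT (Function.update ts _ u)]
            rw [show Function.update ts ⟨1, by simp [uar]⟩ u ⟨1, by simp [uar]⟩ = u from by simp,
                show Function.update ts ⟨1, by simp [uar]⟩ u ⟨0, by simp [uar]⟩
                  = ts ⟨0, by simp [uar]⟩ from by
                  rw [Function.update_of_ne (by simp [Fin.ext_iff])]]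
            rw [show bs.foldl appT (appT (ts ⟨0, by simp [uar]⟩) (ts ⟨1, by simp [uar]⟩))
                = (ts ⟨1, by simp [uar]⟩ :: bs).foldl appT (ts ⟨0, by simp [uar]⟩) from rfl,
               show bs.foldl appT (appT (ts ⟨0, by simp [uar]⟩) u)
                = (u :: bs).foldl appT (ts ⟨0, by simp [uar]⟩) from rfl]
            rw [down_fold, down_fold]
            simp only [List.map_cons, List.foldl_cons]
            obtain ⟨g, base, k, hbase⟩ := merge_as_update aa (down aa (ts ⟨0, by simp [uar]⟩))
            rw [hbase, hbase]
            exact fold_arg_tg aa (ih []) g base k _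
      | some p, ts, i, ih =>
          rw [down_fold, down_fold, down_some, down_some]
          have h1 : (fun k => down aa (Function.update ts i u k))
              = Function.update (fun k => down aa (ts k)) i (down aa u) := by
            funext k
            by_cases hk : k = i
            · subst hk; simp
            · simp [Function.update_of_ne hk]
          rw [h1]
          have h2 : Term.app (some p) (fun k => down aa (ts k))
              = Term.app (some p) (Function.update (fun k => down aa (ts k)) i (down aa (ts i))) := by
            rw [Function.update_eq_self]
          rw [h2]
          exact fold_arg_tg aa (ih []) (some p) _ i _

end MainSim
section CurryTheory

variable {C : Type}

theorem curry_appT (a b : ATerm C) :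
    curryId (appT a b) = appT (curryId a) (curryId b) := by
  show curryId (.app none _) = _
  rw [curryId]
  congr 1 <;> simp [appT]

theorem ofFn_zero' {n : ℕ} (hn : n = 0) (g : Fin n → ATerm C) : List.ofFn g = [] := by
  subst hn
  simp

theorem curry_constT (c : C) (ts : Fin (uar (some (c, 0))) → ATerm C) :
    curryId (.app (some (c, 0)) ts) = constT c := by
  rw [curryId, ofFn_zero' (by simp [uar])]
  rfl

theorem subst_foldl_appT (cs : List (ATerm C)) (a : ATerm C) (δ : ℕ → ATerm C) :
    (cs.foldl appT a).subst δ = (cs.map (Term.subst δ)).foldl appT (a.subst δ) := by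
  induction cs generalizing a with
  | nil => rfl
  | cons x xs ih =>
      simp only [List.foldl_cons, List.map_cons]
      rw [ih, subst_appT]

theorem curry_subst (t : ATerm C) (σ : ℕ → ATerm C) :
    curryId (t.subst σ) = (curryId t).subst (fun x => curryId (σ x)) := by
  induction t with
  | var x => rfl
  | app f ts ih =>
      match f, ts, ih with
      | none, ts, ih =>
          rw [app_none_eq_appT ts, subst_appT, curry_appT, curry_appT, subst_appT]
          rw [ih ⟨0, by simp [uar]⟩, ih ⟨1, by simp [uar]⟩]
      | some (c, i), ts, ih =>
          show curryId (.app (some (c,i)) fun j => (ts j).subst σ) = _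
          rw [curryId, curryId, subst_foldl_appT, subst_constT, List.map_ofFn]
          exact congrArg (fun l => List.foldl appT (constT c) l)
            (congrArg List.ofFn (funext fun j => ih j))

theorem applicativeT_constT (c : C) : ApplicativeT (constT c) := by
  intro u f ts hsub he
  unfold constT at hsub
  rcases subterm_app_inv hsub with h' | ⟨i, hi⟩
  · subst h'
    injection he with h1 _
    subst h1
    show (0 : ℕ) = 0
    rfl
  · exact absurd i.2 (by simp [uar])

theorem applicativeT_foldl_appT {cs : List (ATerm C)} {a : ATerm C}
    (ha : ApplicativeT a) (hcs : ∀ x ∈ cs, ApplicativeT x) :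
    ApplicativeT (cs.foldl appT a) := by
  induction cs generalizing a with
  | nil => exact ha
  | cons x xs ih =>
      exact ih (applicativeT_appT ha (hcs x (by simp))) (fun y hy => hcs y (by simp [hy]))

theorem curry_applicative (t : ATerm C) : ApplicativeT (curryId t) := by
  induction t with
  | var x => exact applicativeT_var x
  | app f ts ih =>
      match f, ts, ih with
      | none, ts, ih =>
          rw [app_none_eq_appT ts, curry_appT]
          exact applicativeT_appT (ih _) (ih _)
      | some (c, i), ts, ih =>
          rw [curryId]
          refine applicativeT_foldl_appT (applicativeT_constT c) ?_
          intro x hx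
          rw [List.mem_ofFn] at hx
          obtain ⟨j, rfl⟩ := hx
          exact ih j

theorem curry_fix {t : ATerm C} (h : ApplicativeT t) : curryId t = t := by
  induction t with
  | var x => rfl
  | app f ts ih =>
      match f, ts, ih with
      | none, ts, ih =>
          rw [app_none_eq_appT ts, curry_appT]
          have hsub0 : Subterm (ts ⟨0, by simp [uar]⟩) (.app none ts) :=
            Subterm.app _ _ _ _ (Subterm.refl _)
          have hsub1 : Subterm (ts ⟨1, by simp [uar]⟩) (.app none ts) :=
            Subterm.app _ _ _ _ (Subterm.refl _)
          rw [app_none_eq_appT ts] at hsub0 hsub1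
          rw [ih _ (applicativeT_subterm h (by rw [app_none_eq_appT ts]; exact hsub0)),
              ih _ (applicativeT_subterm h (by rw [app_none_eq_appT ts]; exact hsub1))]
      | some (c, i), ts, ih =>
          have : ApplicativeSym (some (c, i)) := h _ _ ts (Subterm.refl _) rfl
          have hi : i = 0 := this
          subst hi
          rw [curry_constT, app_some_eq_constT]

theorem curry_U_eq {aa : C → ℕ} {a b : ATerm C} (h : Rew (USys aa) a b) :
    curryId a = curryId b := by
  induction h with
  | rule l r σ hmem =>
      obtain ⟨c, i, hlt, hp⟩ := hmem
      have hl' : l = appT (fiT c i) (.var i) := by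
        have := congrArg Prod.fst hp; simpa using this
      have hr' : r = fiT c (i+1) := by
        have := congrArg Prod.snd hp; simpa using this
      subst hl' hr'
      have hcfi : ∀ (m : ℕ), curryId ((fiT c m).subst σ)
          = (List.ofFn (fun j : Fin m => curryId (σ j.1))).foldl appT (constT c) := by
        intro m
        rw [subst_fiT, curryId]
        rfl
      rw [subst_appT, curry_appT, hcfi, hcfi]
      rw [List.ofFn_succ']
      simp only [Fin.coe_castSucc, Fin.val_last]
      rw [List.concat_eq_append, List.foldl_append]
      simp only [List.foldl_cons, List.foldl_nil]
      rfl
  | congr f ts i u hstep ih =>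
      match f, ts, i, ih with
      | none, ts, i, ih =>
          rcases fin_uar_none_cases i with hi | hi <;> subst hi <;>
            rw [app_none_eq_appT ts, app_none_eq_appT (Function.update ts _ u),
                curry_appT, curry_appT]
          · rw [show Function.update ts ⟨0, by simp [uar]⟩ u ⟨0, by simp [uar]⟩ = u from by simp,
               show Function.update ts ⟨0, by simp [uar]⟩ u ⟨1, by simp [uar]⟩
                 = ts ⟨1, by simp [uar]⟩ from by
                 rw [Function.update_of_ne (by simp [Fin.ext_iff])], ih]
          · rw [show Function.update ts ⟨1, by simp [uar]⟩ u ⟨1, by simp [uar]⟩ = u from by simp,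
               show Function.update ts ⟨1, by simp [uar]⟩ u ⟨0, by simp [uar]⟩
                 = ts ⟨0, by simp [uar]⟩ from by
                 rw [Function.update_of_ne (by simp [Fin.ext_iff])], ih]
      | some p, ts, i, ih =>
          rw [curryId, curryId]
          congr 2
          funext j
          by_cases hj : j = i
          · subst hj; simp [ih]
          · simp [Function.update_of_ne hj]

theorem curry_U_rstar {aa : C → ℕ} {a b : ATerm C} (h : RStar (USys aa) a b) :
    curryId a = curryId b := by
  induction h with
  | refl => rfl
  | tail _ hstep ih => exact ih.trans (curry_U_eq hstep)

theorem eta_rew {aa : C → ℕ} {R : Set (ATerm C × ATerm C)} {p : ATerm C × ATerm C}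
    (h : Eta aa R p) (δ : ℕ → ATerm C) : Rew R (p.1.subst δ) (p.2.subst δ) := by
  induction h with
  | base p hp =>
      have := Rew.rule (R := R) p.1 p.2 δ (by simpa using hp)
      exact this
  | eta l r c n x _ _ _ _ _ ih =>
      show Rew R ((appT l (.var x)).subst δ) ((appT r (.var x)).subst δ)
      rw [subst_appT, subst_appT]
      exact rew_appT_left _ ih

theorem eta_applicative {aa : C → ℕ} {R : Set (ATerm C × ATerm C)} (hR : IsATRS R)
    {p : ATerm C × ATerm C} (h : Eta aa R p) :
    ApplicativeT p.1 ∧ ApplicativeT p.2 := by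
  induction h with
  | base p hp => exact ⟨(hR p hp).2.2.1, (hR p hp).2.2.2⟩
  | eta l r c n x _ _ _ _ _ ih =>
      exact ⟨applicativeT_appT ih.1 (applicativeT_var x),
             applicativeT_appT ih.2 (applicativeT_var x)⟩

theorem ofFn_update {n : ℕ} (g : Fin n → ATerm C) (i : Fin n) (x : ATerm C) :
    List.ofFn (Function.update g i x) = (List.ofFn g).set i.1 x := by
  apply List.ext_getElem
  · simp
  · intro j h1 h2
    simp only [List.getElem_ofFn]
    rw [List.getElem_set]
    by_cases hj : i.1 = j
    · rw [if_pos hj]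
      have he : (⟨j, by simpa using h1⟩ : Fin n) = i := Fin.ext (by show j = i.1; omega)
      rw [he, Function.update_self]
    · rw [if_neg hj]
      rw [Function.update_of_ne (by simp [Fin.ext_iff]; show ¬ j = i.1; omega), List.getElem_ofFn]

theorem foldl_appT_set_rew {ρ : Set (ATerm C × ATerm C)} (cs : List (ATerm C))
    (a : ATerm C) (j : ℕ) (hj : j < cs.length) {y : ATerm C}
    (h : Rew ρ cs[j] y) :
    Rew ρ (cs.foldl appT a) ((cs.set j y).foldl appT a) := by
  induction cs generalizing a j with
  | nil => simp at hj
  | cons x xs ih =>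
      match j with
      | 0 =>
          simp only [List.set_cons_zero, List.foldl_cons]
          exact foldl_appT_acc_rew xs (rew_appT_right a (by simpa using h))
      | j + 1 =>
          simp only [List.set_cons_succ, List.foldl_cons]
          exact ih _ j (by simpa using hj) (by simpa using h)

theorem curry_etaDown_step {aa : C → ℕ} {R : Set (ATerm C × ATerm C)} (hR : IsATRS R)
    {a b : ATerm C} (h : Rew (EtaDown aa R) a b) :
    Rew R (curryId a) (curryId b) := by
  induction h with
  | rule l0 r0 σ hmem =>
      obtain ⟨l, r, hEta, ⟨hstarl, _⟩, ⟨hstarr, _⟩⟩ := hmem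
      rw [curry_subst, curry_subst]
      rw [← curry_U_rstar hstarl, ← curry_U_rstar hstarr]
      rw [curry_fix (eta_applicative hR hEta).1, curry_fix (eta_applicative hR hEta).2]
      exact eta_rew hEta _
  | congr f ts i u hstep ih =>
      match f, ts, i, ih with
      | none, ts, i, ih =>
          rcases fin_uar_none_cases i with hi | hi <;> subst hi <;>
            rw [app_none_eq_appT ts, app_none_eq_appT (Function.update ts _ u),
                curry_appT, curry_appT]
          · rw [show Function.update ts ⟨0, by simp [uar]⟩ u ⟨0, by simp [uar]⟩ = u from by simp,
               show Function.update ts ⟨0, by simp [uar]⟩ u ⟨1, by simp [uar]⟩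
                 = ts ⟨1, by simp [uar]⟩ from by
                 rw [Function.update_of_ne (by simp [Fin.ext_iff])]]
            exact rew_appT_left _ ih
          · rw [show Function.update ts ⟨1, by simp [uar]⟩ u ⟨1, by simp [uar]⟩ = u from by simp,
               show Function.update ts ⟨1, by simp [uar]⟩ u ⟨0, by simp [uar]⟩
                 = ts ⟨0, by simp [uar]⟩ from by
                 rw [Function.update_of_ne (by simp [Fin.ext_iff])]]
            exact rew_appT_right _ ih
      | some p, ts, i, ih =>
          rw [curryId, curryId]
          have he : (fun j => curryId (Function.update ts i u j))
              = Function.update (fun j => curryId (ts j)) i (curryId u) := by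
            funext j
            by_cases hj : j = i
            · subst hj; simp
            · simp [Function.update_of_ne hj]
          rw [he, ofFn_update]
          refine foldl_appT_set_rew _ _ i.1 (by simp [i.2]) ?_
          rw [List.getElem_ofFn]
          simpa using ih

theorem size_constT (c : C) : (constT c).size = 1 := by
  show 1 + _ = 1
  rw [show (∑ i : Fin (uar (some (c,0))), ((Nat.not_lt_zero _ i.isLt).elim : ATerm C).size) = 0 from
    Finset.sum_eq_zero (fun i _ => absurd i.2 (by simp [uar]))]

theorem size_foldl_appT (cs : List (ATerm C)) (a : ATerm C) :
    (cs.foldl appT a).size = a.size + (cs.map (fun x => 1 + x.size)).sum := by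
  induction cs generalizing a with
  | nil => simp
  | cons x xs ih =>
      simp only [List.foldl_cons, List.map_cons, List.sum_cons]
      rw [ih, size_appT]
      omega

theorem size_curry_ge (t : ATerm C) : t.size ≤ (curryId t).size := by
  induction t with
  | var x => exact le_refl _
  | app f ts ih =>
      match f, ts, ih with
      | none, ts, ih =>
          rw [app_none_eq_appT ts, curry_appT, size_appT, size_appT]
          have h0 := ih ⟨0, by simp [uar]⟩
          have h1 := ih ⟨1, by simp [uar]⟩
          omega
      | some (c, i), ts, ih =>
          rw [curryId, size_foldl_appT, size_constT, List.map_ofFn, List.sum_ofFn]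
          show (1 : ℕ) + ∑ j, (ts j).size ≤ 1 + ∑ j : Fin (uar (some (c,i))), (1 + (curryId (ts j)).size)
          have : ∀ j, (ts j).size ≤ 1 + (curryId (ts j)).size := fun j => le_trans (ih j) (by omega)
          have hs : (∑ j : Fin (uar (some (c,i))), (ts j).size)
              ≤ ∑ j : Fin (uar (some (c,i))), (1 + (curryId (ts j)).size) :=
            Finset.sum_le_sum (fun j _ => this j)
          omega

theorem size_curry_le (t : ATerm C) : (curryId t).size + 1 ≤ 2 * t.size := by
  induction t with
  | var x => simp [curryId, Term.size]
  | app f ts ih =>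
      match f, ts, ih with
      | none, ts, ih =>
          rw [app_none_eq_appT ts, curry_appT, size_appT, size_appT]
          have h0 := ih ⟨0, by simp [uar]⟩
          have h1 := ih ⟨1, by simp [uar]⟩
          omega
      | some (c, i), ts, ih =>
          rw [curryId, size_foldl_appT, size_constT, List.map_ofFn, List.sum_ofFn]
          show (1 : ℕ) + (∑ j : Fin (uar (some (c,i))), (1 + (curryId (ts j)).size)) + 1
              ≤ 2 * (1 + ∑ j, (ts j).size)
          have hs : (∑ j : Fin (uar (some (c,i))), (1 + (curryId (ts j)).size))
              ≤ ∑ j : Fin (uar (some (c,i))), 2 * (ts j).size :=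
            Finset.sum_le_sum (fun j _ => by have := ih j; omega)
          have h2 : (∑ j : Fin (uar (some (c,i))), 2 * (ts j).size)
              = 2 * ∑ j, (ts j).size := by rw [Finset.mul_sum]
          omega

end CurryTheory
section Height

variable {C : Type} {R : Set (ATerm C × ATerm C)}

theorem subst_eq_agree {l : ATerm C} {σ σ' : ℕ → ATerm C} (h : l.subst σ = l.subst σ') :
    ∀ x, Subterm (.var x) l → σ x = σ' x := by
  induction l with
  | var y =>
      intro x hx
      cases hx
      exact h
  | app f ts ih =>
      intro x hx
      rcases subterm_app_inv hx with h' | ⟨i, hi⟩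
      · exact absurd h' (by intro he; cases he)
      · have h2 : (fun i => (ts i).subst σ) = (fun i => (ts i).subst σ') := by
          injection h
        exact ih i (congrFun h2 i) x hi

theorem rew_cases {s u : ATerm C} (h : Rew R s u) :
    (∃ p ∈ R, ∃ σ : ℕ → ATerm C, Term.subst σ p.1 = s ∧ u = Term.subst σ p.2) ∨
    (∃ f ts i u', s = Term.app f ts ∧ u = Term.app f (Function.update ts i u') ∧
      Rew R (ts i) u') := by
  cases h with
  | rule l r σ hmem => exact Or.inl ⟨(l,r), hmem, σ, rfl, rfl⟩
  | congr f ts i u' hs => exact Or.inr ⟨f, ts, i, u', rfl, rfl, hs⟩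

theorem root_succ_finite (hfin : R.Finite) (hR : IsATRS R) (s : ATerm C) :
    (⋃ p ∈ R, {u | ∃ σ : ℕ → ATerm C,
      Term.subst σ p.1 = s ∧ u = Term.subst σ p.2}).Finite := by
  refine Set.Finite.biUnion hfin (fun p hp => Set.Subsingleton.finite ?_)
  rintro u ⟨σ, hσ, rfl⟩ v ⟨σ', hσ', rfl⟩
  apply subst_ext
  intro x hx
  exact subst_eq_agree (hσ.trans hσ'.symm) x ((hR p hp).2.1 x hx)

theorem rew_step_finite (hfin : R.Finite) (hR : IsATRS R) :
    ∀ s : ATerm C, {u | Rew R s u}.Finite := by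
  intro s
  induction s with
  | var x =>
      apply Set.Finite.subset Set.finite_empty
      intro u hu
      exfalso
      rcases rew_cases hu with ⟨p, hp, σ, hσ, _⟩ | ⟨f, ts, i, u', heq, _, _⟩
      · match hq : p.1, hσ with
        | .var y, hσ => exact (hR p hp).1 y hq
        | .app f ts, hσ => cases hσ
      · cases heq
  | app f ts ih =>
      apply Set.Finite.subset
        (Set.Finite.union (root_succ_finite hfin hR (.app f ts))
          (Set.finite_iUnion (fun i : Fin (uar f) =>
            Set.Finite.image (fun u' => Term.app f (Function.update ts i u')) (ih i))))
      intro u hu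
      rcases rew_cases hu with ⟨p, hp, σ, hσ, he⟩ | ⟨g, gs, i, u', heq, he, hr⟩
      · exact Or.inl (Set.mem_biUnion hp ⟨σ, hσ, he⟩)
      · right
        injection heq with h1 h2
        subst h1
        subst h2
        exact Set.mem_iUnion.mpr ⟨i, ⟨u', hr, he.symm⟩⟩

variable (hfin : R.Finite) (hR : IsATRS R) (hterm : Terminating R)

/-- derivation height function, defined by well-founded recursion -/
noncomputable def hgt : ATerm C → ℕ :=
  WellFounded.fix hterm (fun s ih =>
    ((rew_step_finite hfin hR s).toFinset.attach).sup
      (fun u => ih u.1 ((Set.Finite.mem_toFinset _).mp u.2) + 1))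

theorem hgt_eq (s : ATerm C) :
    hgt hfin hR hterm s = ((rew_step_finite hfin hR s).toFinset.attach).sup
      (fun u => hgt hfin hR hterm u.1 + 1) := by
  rw [hgt]; erw [WellFounded.fix_eq]

theorem hgt_lt {s t : ATerm C} (h : Rew R s t) :
    hgt hfin hR hterm t < hgt hfin hR hterm s := by
  rw [hgt_eq hfin hR hterm s]
  have hmem : t ∈ (rew_step_finite hfin hR s).toFinset :=
    (Set.Finite.mem_toFinset _).mpr h
  have := Finset.le_sup (f := fun u : {x // x ∈ (rew_step_finite hfin hR s).toFinset} =>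
    hgt hfin hR hterm u.1 + 1) (Finset.mem_attach _ ⟨t, hmem⟩)
  exact Nat.lt_of_lt_of_le (Nat.lt_succ_self _) this

theorem relPow_le_hgt {m : ℕ} {s w : ATerm C} (h : RelPow (Rew R) m s w) :
    m ≤ hgt hfin hR hterm s := by
  induction m generalizing s with
  | zero => exact Nat.zero_le _
  | succ m ih =>
      obtain ⟨b, hb, hrest⟩ := h
      have h1 := ih hrest
      have h2 := hgt_lt hfin hR hterm hb
      omega

end Height

section Growth

variable {C : Type} {R : Set (ATerm C × ATerm C)}

/-- growth constant of a finite system -/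
noncomputable def growC (hfin : R.Finite) : ℕ :=
  1 + hfin.toFinset.sup (fun p => p.2.size)

theorem growC_pos (hfin : R.Finite) : 1 ≤ growC hfin := by
  unfold growC; omega

theorem rule_size_le (hfin : R.Finite) {p : ATerm C × ATerm C} (hp : p ∈ R) :
    p.2.size ≤ growC hfin := by
  have h1 : p.2.size ≤ hfin.toFinset.sup (fun p : ATerm C × ATerm C => p.2.size) :=
    Finset.le_sup (s := hfin.toFinset) (f := fun p : ATerm C × ATerm C => p.2.size)
      (hfin.mem_toFinset.mpr hp)
  unfold growC
  omega

theorem rew_R_size (hfin : R.Finite) (hR : IsATRS R) {a b : ATerm C} (h : Rew R a b) :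
    b.size ≤ a.size * growC hfin := by
  refine rew_size_le (growC_pos hfin) ?_ h
  intro p hp σ
  have h1 : (p.2.subst σ).size ≤ p.2.size * (p.1.subst σ).size := by
    refine size_subst_le (size_pos _) ?_
    intro x hx
    exact subterm_size_le (subterm_var_subst σ ((hR p hp).2.1 x hx))
  calc (p.2.subst σ).size ≤ p.2.size * (p.1.subst σ).size := h1
    _ ≤ growC hfin * (p.1.subst σ).size :=
        Nat.mul_le_mul_right _ (rule_size_le hfin hp)
    _ = (p.1.subst σ).size * growC hfin := Nat.mul_comm _ _

theorem relPow_R_size (hfin : R.Finite) (hR : IsATRS R) {m : ℕ} {a b : ATerm C}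
    (h : RelPow (Rew R) m a b) : b.size ≤ a.size * (growC hfin)^m := by
  induction m generalizing a with
  | zero => cases h; simp
  | succ m ih =>
      obtain ⟨d, hd, hrest⟩ := h
      have h1 : b.size ≤ d.size * (growC hfin)^m := ih hrest
      have h2 : d.size ≤ a.size * growC hfin := rew_R_size hfin hR hd
      calc b.size ≤ d.size * (growC hfin)^m := h1
        _ ≤ (a.size * growC hfin) * (growC hfin)^m := Nat.mul_le_mul_right _ h2
        _ = a.size * (growC hfin)^(m+1) := by ring

end Growth

section NUBound

variable {C : Type} {R : Set (ATerm C × ATerm C)} {aa : C → ℕ}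

theorem ud_len_bound (hfin : R.Finite) (hR : IsATRS R) (hterm : Terminating R) :
    ∀ (M : ℕ) (a w : ATerm C), RelPow (Rew (UD aa R)) M a w →
    ∀ S : ℕ, (∀ (m : ℕ) (b : ATerm C), RelPow (Rew R) m (curryId a) b → b.size ≤ S) →
    M ≤ hgt hfin hR hterm (curryId a) * (S + 1) + a.size := by
  intro M
  induction M with
  | zero => intro a w _ S _; exact Nat.zero_le _
  | succ M ih =>
      intro a w h S hS
      obtain ⟨a', hstep, hrest⟩ := h
      rcases rew_union_split hstep with hE | hU
      · -- EtaDown step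
        have hc : Rew R (curryId a) (curryId a') := curry_etaDown_step hR hE
        have hglt := hgt_lt hfin hR hterm hc
        have hS' : ∀ (m : ℕ) (b : ATerm C), RelPow (Rew R) m (curryId a') b → b.size ≤ S := by
          intro m b hb
          exact hS (m+1) b ⟨curryId a', hc, hb⟩
        have hsz : a'.size ≤ S := by
          have h1 : (curryId a').size ≤ S := hS' 0 (curryId a') rfl
          have h2 := size_curry_ge a'
          omega
        have h1 := ih a' w hrest S hS'
        set g := hgt hfin hR hterm (curryId a)
        set g' := hgt hfin hR hterm (curryId a')
        have h2 : (g' + 1) * (S + 1) ≤ g * (S + 1) := Nat.mul_le_mul_right _ (by omega)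
        have h3 : (g' + 1) * (S + 1) = g' * (S + 1) + (S + 1) := Nat.succ_mul _ _
        omega
      · -- USys step
        have hc : curryId a' = curryId a := (curry_U_eq hU).symm
        have hsz : a.size = a'.size + 1 := size_rew_U aa hU
        have h1 := ih a' w hrest S (by rw [hc]; exact hS)
        rw [hc] at h1
        omega

end NUBound
section Collapse

variable {C : Type} {R : Set (ATerm C × ATerm C)}

/-- constants occurring in the rules -/
def relCset (R : Set (ATerm C × ATerm C)) : Set C :=
  {c | ∃ p ∈ R, Subterm (constT c) p.1 ∨ Subterm (constT c) p.2}

/-- possible head constant -/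
def headset : USig C → Set C
  | some (c, 0) => {c}
  | _ => ∅

theorem headset_finite (f : USig C) : (headset f).Finite := by
  match f with
  | none => exact Set.finite_empty
  | some (c, 0) => exact Set.finite_singleton c
  | some (c, _+1) => exact Set.finite_empty

theorem constIn_finite (t : ATerm C) : {c | Subterm (constT c) t}.Finite := by
  induction t with
  | var x =>
      apply Set.Finite.subset Set.finite_empty
      intro c hc
      cases hc
  | app f ts ih =>
      apply Set.Finite.subset
        ((headset_finite f).union (Set.finite_iUnion (fun i : Fin (uar f) => ih i)))
      intro c hc
      rcases subterm_app_inv (hc : Subterm (constT c) (.app f ts)) with h' | ⟨i, hi⟩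
      · left
        have h'' : Term.app (some (c, 0))
            (fun i => ((Nat.not_lt_zero _ i.isLt).elim : ATerm C)) = Term.app f ts := h'
        injection h'' with h1 _
        subst h1
        show c ∈ headset (some (c, 0))
        rfl
      · exact Or.inr (Set.mem_iUnion.mpr ⟨i, hi⟩)

theorem relCset_finite (hfin : R.Finite) : (relCset R).Finite := by
  apply Set.Finite.subset
    (Set.Finite.biUnion hfin (fun p _ => (constIn_finite p.1).union (constIn_finite p.2)))
  rintro c ⟨p, hp, hor⟩
  exact Set.mem_biUnion hp hor

open Classical in
/-- collapse irrelevant constants and all variables -/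
noncomputable def psi (R : Set (ATerm C × ATerm C)) : ATerm C → ATerm C
  | .var _ => .var 0
  | .app none ts => appT (psi R (ts ⟨0, by simp [uar]⟩)) (psi R (ts ⟨1, by simp [uar]⟩))
  | .app (some (c, 0)) _ => if c ∈ relCset R then constT c else .var 0
  | .app (some (_, _+1)) _ => .var 0

theorem psi_appT (a b : ATerm C) : psi R (appT a b) = appT (psi R a) (psi R b) := by
  show psi R (.app none _) = _
  rw [psi]
  congr 1 <;> simp [appT]

theorem psi_size (t : ATerm C) : (psi R t).size ≤ t.size := by
  induction t with
  | var x => exact le_refl _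
  | app f ts ih =>
      match f, ts, ih with
      | none, ts, ih =>
          rw [app_none_eq_appT ts, psi_appT, size_appT, size_appT]
          have h0 := ih ⟨0, by simp [uar]⟩
          have h1 := ih ⟨1, by simp [uar]⟩
          omega
      | some (c, 0), ts, ih =>
          rw [psi]
          have := size_pos (Term.app (some (c,0)) ts)
          by_cases hc : c ∈ relCset R
          · rw [if_pos hc, size_constT]; omega
          · rw [if_neg hc]; show 1 ≤ _; omega
      | some (c, i+1), ts, ih =>
          rw [psi]
          have := size_pos (Term.app (some (c,i+1)) ts)
          show 1 ≤ _
          omega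

theorem applicativeT_app_parts {f : USig C} {ts : Fin (uar f) → ATerm C}
    (h : ApplicativeSym f) (hts : ∀ i, ApplicativeT (ts i)) :
    ApplicativeT (.app f ts) := by
  intro u g gs hsub he
  rcases subterm_app_inv hsub with h' | ⟨i, hi⟩
  · subst h'
    injection he with h1 _
    subst h1
    exact h
  · exact hts i u g gs hi he

theorem applicativeT_subst {r : ATerm C} {σ : ℕ → ATerm C} (hr : ApplicativeT r)
    (hσ : ∀ x, Subterm (.var x) r → ApplicativeT (σ x)) :
    ApplicativeT (r.subst σ) := by
  intro u f ts hsub he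
  rcases subterm_subst_inv hsub with ⟨g, gs, hsubt, rfl⟩ | ⟨x, hx, hu⟩
  · have he2 : Term.app g (fun i => (gs i).subst σ) = Term.app f ts := he
    injection he2 with h1 _
    subst h1
    exact hr _ g gs hsubt rfl
  · exact hσ x hx u f ts hu he

theorem rew_applicative (hR : IsATRS R) {a b : ATerm C} (h : Rew R a b)
    (ha : ApplicativeT a) : ApplicativeT b := by
  induction h with
  | rule l r σ hmem =>
      refine applicativeT_subst (hR _ hmem).2.2.2 ?_
      intro x hx
      have hxl : Subterm (.var x) l := (hR _ hmem).2.1 x hx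
      exact applicativeT_subterm ha (subterm_var_subst σ hxl)
  | congr f ts i u hstep ih =>
      have hsym : ApplicativeSym f := ha _ f ts (Subterm.refl _) rfl
      have hu : ApplicativeT u :=
        ih (applicativeT_subterm ha (Subterm.app f ts i _ (Subterm.refl _)))
      refine applicativeT_app_parts hsym ?_
      intro j
      by_cases hj : j = i
      · subst hj; simpa using hu
      · rw [Function.update_of_ne hj]
        exact applicativeT_subterm ha (Subterm.app f ts j _ (Subterm.refl _))

theorem psi_subst_app {t : ATerm C} {σ : ℕ → ATerm C} (ht : ApplicativeT t)
    (hc : ∀ c, Subterm (constT c) t → c ∈ relCset R) :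
    psi R (t.subst σ) = t.subst (fun x => psi R (σ x)) := by
  induction t with
  | var x => rfl
  | app f ts ih =>
      match f, ts, ih with
      | none, ts, ih =>
          have hs0 : Subterm (ts ⟨0, by simp [uar]⟩) (.app none ts) :=
            Subterm.app _ _ _ _ (Subterm.refl _)
          have hs1 : Subterm (ts ⟨1, by simp [uar]⟩) (.app none ts) :=
            Subterm.app _ _ _ _ (Subterm.refl _)
          show psi R (.app none fun i => (ts i).subst σ) = _
          rw [app_none_eq_appT (fun i => (ts i).subst σ), psi_appT]
          rw [app_none_eq_appT ts, subst_appT]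
          rw [ih ⟨0, by simp [uar]⟩ (applicativeT_subterm ht hs0)
              (fun c hcc => hc c (Subterm.trans hcc hs0)),
            ih ⟨1, by simp [uar]⟩ (applicativeT_subterm ht hs1)
              (fun c hcc => hc c (Subterm.trans hcc hs1))]
      | some (c, i), ts, ih =>
          have hsym : ApplicativeSym (some (c, i)) := ht _ _ ts (Subterm.refl _) rfl
          have hi : i = 0 := hsym
          subst hi
          have hcc : c ∈ relCset R := by
            refine hc c ?_
            rw [app_some_eq_constT]
            exact Subterm.refl _
          show psi R (.app (some (c, 0)) fun i => (ts i).subst σ) = _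
          rw [psi, if_pos hcc]
          rw [show (Term.app (some (c,0)) ts).subst (fun x => psi R (σ x))
              = Term.app (some (c,0)) (fun i => (ts i).subst (fun x => psi R (σ x))) from rfl,
            app_some_eq_constT]

theorem psi_rew (hR : IsATRS R) {a b : ATerm C} (h : Rew R a b) (ha : ApplicativeT a) :
    Rew R (psi R a) (psi R b) := by
  induction h with
  | rule l r σ hmem =>
      have hlc : ∀ c, Subterm (constT c) l → c ∈ relCset R :=
        fun c hcc => ⟨(l, r), hmem, Or.inl hcc⟩
      have hrc : ∀ c, Subterm (constT c) r → c ∈ relCset R :=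
        fun c hcc => ⟨(l, r), hmem, Or.inr hcc⟩
      rw [psi_subst_app (hR _ hmem).2.2.1 hlc, psi_subst_app (hR _ hmem).2.2.2 hrc]
      exact Rew.rule l r _ hmem
  | congr f ts i u hstep ih =>
      have hsym : ApplicativeSym f := ha _ f ts (Subterm.refl _) rfl
      match f, ts, i, ih, hsym, ha with
      | some (c, j), ts, i, ih, hsym, ha =>
          have hj : j = 0 := hsym
          subst hj
          exact absurd i.2 (by simp [uar])
      | none, ts, i, ih, hsym, ha =>
          have hsi : ApplicativeT (ts i) :=
            applicativeT_subterm ha (Subterm.app none ts i _ (Subterm.refl _))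
          rcases fin_uar_none_cases i with hi | hi <;> subst hi <;>
            rw [app_none_eq_appT ts, app_none_eq_appT (Function.update ts _ u),
                psi_appT, psi_appT]
          · rw [show Function.update ts ⟨0, by simp [uar]⟩ u ⟨0, by simp [uar]⟩ = u from by simp,
               show Function.update ts ⟨0, by simp [uar]⟩ u ⟨1, by simp [uar]⟩
                 = ts ⟨1, by simp [uar]⟩ from by
                 rw [Function.update_of_ne (by simp [Fin.ext_iff])]]
            exact rew_appT_left _ (ih hsi)
          · rw [show Function.update ts ⟨1, by simp [uar]⟩ u ⟨1, by simp [uar]⟩ = u from by simp,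
               show Function.update ts ⟨1, by simp [uar]⟩ u ⟨0, by simp [uar]⟩
                 = ts ⟨0, by simp [uar]⟩ from by
                 rw [Function.update_of_ne (by simp [Fin.ext_iff])]]
            exact rew_appT_right _ (ih hsi)

/-- terms over the collapsed finite vocabulary -/
inductive Collapsed (R : Set (ATerm C × ATerm C)) : ATerm C → Prop
  | var0 : Collapsed R (.var 0)
  | const (c : C) (h : c ∈ relCset R) : Collapsed R (constT c)
  | app (a b : ATerm C) : Collapsed R a → Collapsed R b → Collapsed R (appT a b)

theorem psi_collapsed (t : ATerm C) : Collapsed R (psi R t) := by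
  induction t with
  | var x => exact Collapsed.var0
  | app f ts ih =>
      match f, ts, ih with
      | none, ts, ih =>
          rw [app_none_eq_appT ts, psi_appT]
          exact Collapsed.app _ _ (ih _) (ih _)
      | some (c, 0), ts, ih =>
          rw [psi]
          by_cases hc : c ∈ relCset R
          · rw [if_pos hc]; exact Collapsed.const c hc
          · rw [if_neg hc]; exact Collapsed.var0
      | some (c, i+1), ts, ih =>
          rw [psi]
          exact Collapsed.var0

theorem collapsed_finite (hfin : R.Finite) :
    ∀ N, {t : ATerm C | Collapsed R t ∧ t.size ≤ N}.Finite := by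
  intro N
  induction N with
  | zero =>
      apply Set.Finite.subset Set.finite_empty
      rintro t ⟨_, hsz⟩
      have := size_pos t
      omega
  | succ N ihN =>
      apply Set.Finite.subset
        (((Set.finite_singleton (Term.var 0 : ATerm C)).union
            ((relCset_finite hfin).image constT)).union
          (Set.Finite.image2 appT ihN ihN))
      rintro t ⟨hc, hsz⟩
      cases hc with
      | var0 => exact Or.inl (Or.inl rfl)
      | const c h => exact Or.inl (Or.inr ⟨c, h, rfl⟩)
      | app a b hca hcb =>
          right
          rw [size_appT] at hsz
          have hha := size_pos a
          have hhb := size_pos b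
          exact Set.mem_image2.mpr ⟨a, ⟨hca, by omega⟩, b, ⟨hcb, by omega⟩, rfl⟩

theorem psi_hgt (hfin : R.Finite) (hR : IsATRS R) (hterm : Terminating R) :
    ∀ x : ATerm C, ApplicativeT x →
      hgt hfin hR hterm x ≤ hgt hfin hR hterm (psi R x) := by
  intro x
  refine WellFounded.induction hterm x (C := fun x => ApplicativeT x →
    hgt hfin hR hterm x ≤ hgt hfin hR hterm (psi R x)) ?_
  intro s ih ha
  rw [hgt_eq hfin hR hterm s]
  apply Finset.sup_le
  intro u _
  have hru : Rew R s u.1 := (Set.Finite.mem_toFinset _).mp u.2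
  have h1 := ih u.1 hru (rew_applicative hR hru ha)
  have h3 := hgt_lt hfin hR hterm (psi_rew hR hru ha)
  omega

end Collapse

/-- for a terminating ATRS `R`, `dh(→_R, t) ≤ dh(→_{U↓(R)}, t)`
for every term over the signature of `R`, hence `dc_R(n) ≤ dc_{U↓(R)}(n)` and
in particular `dc_R(n) ∈ O(dc_{U↓(R)}(n))`. -/
theorem dc_reflect {C : Type} (R : Set (ATerm C × ATerm C)) (aa : C → ℕ)
    (hR : IsATRS R) (hl : LHVF R) (haa : AASpec R aa)
    (hfin : R.Finite) (hterm : Terminating R) :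
    (∀ t : ATerm C, ApplicativeT t → dh (Rew R) t ≤ dh (Rew (UD aa R)) t) ∧
    (∀ n, dcOn (Rew R) ApplicativeT n ≤ dcOn (Rew (UD aa R)) (GoodTerm aa) n) ∧
    BigO (dcOn (Rew R) ApplicativeT) (dcOn (Rew (UD aa R)) (GoodTerm aa)) := by
  classical
  -- forward simulation on derivation lengths
  have hsim2 : ∀ (m : ℕ) (x u : ATerm C), RelPow (Rew R) m x u →
      ∃ M v, m ≤ M ∧ RelPow (Rew (UD aa R)) M (down aa x) v := by
    intro m
    induction m with
    | zero => intro x u _; exact ⟨0, down aa x, le_refl 0, rfl⟩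
    | succ m ih =>
        intro x u h
        obtain ⟨b, hb, hrest⟩ := h
        obtain ⟨n1, hn1, hpow1⟩ := transGen_relPow (main_sim hR hl haa hb [])
        obtain ⟨M, v, hM, hpow2⟩ := ih b u hrest
        exact ⟨n1 + M, v, by omega, relPow_add hpow1 hpow2⟩
  have hsim : ∀ t : ATerm C, ∀ m : ℕ, (∃ u, RelPow (Rew R) m t u) →
      ∃ v, RelPow (Rew (UD aa R)) m t v := by
    rintro t m ⟨u, hu⟩
    obtain ⟨k, hk⟩ := reflTransGen_relPow
      (Relation.ReflTransGen.mono (fun _ _ h => rew_mono Set.subset_union_right h) _ _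
        (rstar_down aa t))
    obtain ⟨M, v, hM, hpow⟩ := hsim2 m t u hu
    exact relPow_prefix (relPow_add hk hpow) m (by omega)
  -- uniform bound on UD-derivation lengths
  have hUDbound : ∀ t : ATerm C, ∀ M : ℕ, (∃ w, RelPow (Rew (UD aa R)) M t w) →
      M ≤ hgt hfin hR hterm (curryId t) *
          ((curryId t).size * (growC hfin) ^ (hgt hfin hR hterm (curryId t)) + 1) + t.size := by
    rintro t M ⟨w, hw⟩
    refine ud_len_bound hfin hR hterm M t w hw _ ?_
    intro m b hb
    have h1 : b.size ≤ (curryId t).size * (growC hfin) ^ m := relPow_R_size hfin hR hb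
    have h2 : m ≤ hgt hfin hR hterm (curryId t) := relPow_le_hgt hfin hR hterm hb
    have h3 : (growC hfin) ^ m ≤ (growC hfin) ^ (hgt hfin hR hterm (curryId t)) :=
      Nat.pow_le_pow_right (growC_pos hfin) h2
    exact le_trans h1 (Nat.mul_le_mul_left _ h3)
  -- part 1
  have part1 : ∀ t : ATerm C, ApplicativeT t → dh (Rew R) t ≤ dh (Rew (UD aa R)) t := by
    intro t _
    unfold dh
    have hne : {m | ∃ u, RelPow (Rew R) m t u}.Nonempty := ⟨0, t, rfl⟩
    apply csSup_le hne
    intro m hm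
    refine le_csSup ⟨hgt hfin hR hterm (curryId t) *
        ((curryId t).size * (growC hfin) ^ (hgt hfin hR hterm (curryId t)) + 1) + t.size, ?_⟩
      (hsim t m hm)
    rintro M hM
    exact hUDbound t M hM
  -- part 2
  have part2 : ∀ n, dcOn (Rew R) ApplicativeT n ≤ dcOn (Rew (UD aa R)) (GoodTerm aa) n := by
    intro n
    set G := ((collapsed_finite hfin (2*n)).toFinset).sup (hgt hfin hR hterm) with hG
    have hgbound : ∀ t : ATerm C, t.size ≤ n →
        hgt hfin hR hterm (curryId t) ≤ G := by
      intro t htn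
      have h1 : hgt hfin hR hterm (curryId t) ≤ hgt hfin hR hterm (psi R (curryId t)) :=
        psi_hgt hfin hR hterm _ (curry_applicative t)
      have h2 : psi R (curryId t) ∈ (collapsed_finite hfin (2*n)).toFinset := by
        rw [Set.Finite.mem_toFinset]
        refine ⟨psi_collapsed _, ?_⟩
        have hp := psi_size (R := R) (curryId t)
        have hc := size_curry_le t
        omega
      exact le_trans h1 (Finset.le_sup h2)
    set K := G * (2*n * (growC hfin)^G + 1) + n with hK
    have hdhUD : ∀ t : ATerm C, t.size ≤ n → dh (Rew (UD aa R)) t ≤ K := by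
      intro t htn
      unfold dh
      have hne : {m | ∃ u, RelPow (Rew (UD aa R)) m t u}.Nonempty := ⟨0, t, rfl⟩
      apply csSup_le hne
      intro M hM
      have h1 := hUDbound t M hM
      have hg := hgbound t htn
      have hsz : (curryId t).size ≤ 2*n := by have := size_curry_le t; omega
      have hpow : (growC hfin) ^ (hgt hfin hR hterm (curryId t)) ≤ (growC hfin) ^ G :=
        Nat.pow_le_pow_right (growC_pos hfin) hg
      have h4 : (curryId t).size * (growC hfin) ^ (hgt hfin hR hterm (curryId t))
          ≤ 2*n * (growC hfin)^G := Nat.mul_le_mul hsz hpow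
      have h5 : hgt hfin hR hterm (curryId t) *
            ((curryId t).size * (growC hfin) ^ (hgt hfin hR hterm (curryId t)) + 1)
          ≤ G * (2*n * (growC hfin)^G + 1) := Nat.mul_le_mul hg (by omega)
      omega
    by_cases hA : {m | ∃ t : ATerm C, ApplicativeT t ∧ t.size ≤ n ∧ m = dh (Rew R) t}.Nonempty
    · unfold dcOn
      apply csSup_le hA
      rintro m ⟨t, hta, htn, rfl⟩
      have h1 : dh (Rew R) t ≤ dh (Rew (UD aa R)) t := part1 t hta
      have hB : BddAbove {m | ∃ t : ATerm C, GoodTerm aa t ∧ t.size ≤ n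
          ∧ m = dh (Rew (UD aa R)) t} := by
        refine ⟨K, ?_⟩
        rintro M ⟨t', _, htn', rfl⟩
        exact hdhUD t' htn'
      exact le_trans h1 (le_csSup hB ⟨t, applicativeT_good aa hta, htn, rfl⟩)
    · unfold dcOn
      rw [Set.not_nonempty_iff_eq_empty.mp hA, csSup_empty]
      exact Nat.zero_le _
  exact ⟨part1, part2, 1, 0, fun n => by have := part2 n; omega⟩
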